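/- arXiv:1012.2898 — 5 statements merged into one kernel-verified Lean document; each statement's English description precedes it below -/
import Mathlib

section
/- Let 𝔊 be a self-adjoint Lie subalgebra of M(n,ℝ). Let Z(𝔊) denote the center of 𝔊 and let 𝔊₀ denote the orthogonal complement of Z(𝔊) in 𝔊 relative to the canonical inner product. Then: (1) 𝔊 = Z(𝔊) ⊕ 𝔊₀; (2) Z(𝔊) and 𝔊₀ are self-adjoint ideals of 𝔊; (3) 𝔊₀ is semisimple. -/
open Matrix Filter Topology

noncomputable section

attribute [instance 100] LieRing.ofAssociativeRing

/-- The space M(n,ℝ) of n × n real matrices. -/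
abbrev Mat (n : ℕ) := Matrix (Fin n) (Fin n) ℝ

/-- ℝⁿ with its standard (Euclidean) inner product. -/
abbrev Euc (n : ℕ) := EuclideanSpace ℝ (Fin n)

/-- The action of a matrix on Euclidean space. -/
def act {n : ℕ} (X : Mat n) (v : Euc n) : Euc n := Matrix.toEuclideanLin X v

/-- The matrix exponential. -/
def mexp {n : ℕ} (X : Mat n) : Mat n := NormedSpace.exp X

/-- The canonical inner product ⟨A,B⟩ = trace (A Bᵀ) on M(n,ℝ). -/
def minner {n : ℕ} (A B : Mat n) : ℝ := Matrix.trace (A * Bᵀ)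

/-- The norm associated to the canonical inner product on M(n,ℝ). -/
def mnorm {n : ℕ} (A : Mat n) : ℝ := Real.sqrt (minner A A)

/-- The Lie algebra 𝔊 of a subgroup G of GL(n,ℝ):
𝔊 = {X ∈ M(n,ℝ) : exp(tX) ∈ G for all t ∈ ℝ}. -/
def lieAlgOf {n : ℕ} (G : Subgroup (GL (Fin n) ℝ)) : Set (Mat n) :=
  {X | ∀ t : ℝ, ∃ g ∈ G, (g : Mat n) = mexp (t • X)}

/-- G is self-adjoint: gᵀ ∈ G whenever g ∈ G. -/
def IsSelfAdjointSubgroup {n : ℕ} (G : Subgroup (GL (Fin n) ℝ)) : Prop :=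
  ∀ g ∈ G, ∃ h ∈ G, (h : Mat n) = (g : Mat n)ᵀ

/-- 𝔎 : the set of skew-symmetric elements of the Lie algebra of G. -/
def kSet {n : ℕ} (G : Subgroup (GL (Fin n) ℝ)) : Set (Mat n) :=
  {X ∈ lieAlgOf G | Xᵀ = -X}

/-- 𝔊_v : the stabilizer subalgebra {X ∈ 𝔊 : X(v) = 0}. -/
def stabAlg {n : ℕ} (G : Subgroup (GL (Fin n) ℝ)) (v : Euc n) : Set (Mat n) :=
  {X ∈ lieAlgOf G | act X v = 0}

/-- 𝔓̃_v : the orthogonal complement of 𝔎 + 𝔊_v in 𝔊 w.r.t. the canonical inner product. -/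
def tildeP {n : ℕ} (G : Subgroup (GL (Fin n) ℝ)) (v : Euc n) : Set (Mat n) :=
  {X ∈ lieAlgOf G | ∀ Y : Mat n, (Y ∈ kSet G ∨ Y ∈ stabAlg G v) → minner X Y = 0}

/-- `v` has a nonzero component in the μ-eigenspace of X. -/
def hasComp {n : ℕ} (X : Mat n) (v : Euc n) (μ : ℝ) : Prop :=
  Submodule.orthogonalProjectionOnto (Module.End.eigenspace (Matrix.toEuclideanLin X) μ) v ≠ 0

/-- λ_X(v) : the largest eigenvalue μ of X such that v has a nonzero component
in the μ-eigenspace of X. -/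
def lambdaOf {n : ℕ} (X : Mat n) (v : Euc n) : ℝ := sSup {μ : ℝ | hasComp X v μ}

/-- μ_X(v) : the smallest eigenvalue μ of X such that v has a nonzero component
in the μ-eigenspace of X. -/
def muOf {n : ℕ} (X : Mat n) (v : Euc n) : ℝ := sInf {μ : ℝ | hasComp X v μ}

/-- λ⁻(v) = inf {λ_X(v) : X ∈ 𝔓̃_v, |X| = 1}. -/
def lamMinus {n : ℕ} (G : Subgroup (GL (Fin n) ℝ)) (v : Euc n) : ℝ :=
  sInf {r : ℝ | ∃ X ∈ tildeP G v, mnorm X = 1 ∧ r = lambdaOf X v}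

/-- λ⁺(v) = sup {λ_X(v) : X ∈ 𝔓̃_v, |X| = 1}. -/
def lamPlus {n : ℕ} (G : Subgroup (GL (Fin n) ℝ)) (v : Euc n) : ℝ :=
  sSup {r : ℝ | ∃ X ∈ tildeP G v, mnorm X = 1 ∧ r = lambdaOf X v}

/-- The orbit G(v). -/
def orbitOf {n : ℕ} (G : Subgroup (GL (Fin n) ℝ)) (v : Euc n) : Set (Euc n) :=
  {w | ∃ g ∈ G, w = act (g : Mat n) v}

/-- v is a minimal vector for G : |g(v)| ≥ |v| for all g ∈ G. -/
def IsMinimalVec {n : ℕ} (G : Subgroup (GL (Fin n) ℝ)) (v : Euc n) : Prop :=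
  ∀ g ∈ G, ‖v‖ ≤ ‖act (g : Mat n) v‖

namespace Stmt0Aux
variable {n : ℕ}

lemma minner_comm (A B : Mat n) : minner A B = minner B A := by
  rw [minner, minner, ← Matrix.trace_transpose (A * Bᵀ), Matrix.transpose_mul,
    Matrix.transpose_transpose]

lemma minner_add_left (A B C : Mat n) : minner (A + B) C = minner A C + minner B C := by
  simp [minner, Matrix.add_mul]

lemma minner_sub_left (A B C : Mat n) : minner (A - B) C = minner A C - minner B C := by
  simp [minner, Matrix.sub_mul]

lemma minner_smul_left (r : ℝ) (A C : Mat n) : minner (r • A) C = r * minner A C := by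
  simp [minner, Matrix.smul_mul]

lemma minner_self (A : Mat n) : minner A A = ∑ i, ∑ j, A i j ^ 2 := by
  simp [minner, Matrix.trace, Matrix.mul_apply, Matrix.diag, Matrix.transpose_apply, sq]

lemma minner_self_nonneg (A : Mat n) : 0 ≤ minner A A := by
  rw [minner_self]; positivity

lemma eq_zero_of_minner_self {A : Mat n} (h : minner A A = 0) : A = 0 := by
  rw [minner_self] at h
  ext i j
  have h1 : ∀ i ∈ Finset.univ, (0:ℝ) ≤ ∑ j, A i j ^ 2 := fun i _ => by positivity
  have h2 := (Finset.sum_eq_zero_iff_of_nonneg h1).mp h i (Finset.mem_univ i)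
  have h3 : ∀ j ∈ Finset.univ, (0:ℝ) ≤ A i j ^ 2 := fun j _ => by positivity
  have h4 := (Finset.sum_eq_zero_iff_of_nonneg h3).mp h2 j (Finset.mem_univ j)
  simpa [pow_eq_zero_iff] using h4

lemma minner_lie_left (X Y C : Mat n) : minner ⁅X, Y⁆ C = minner Y ⁅Xᵀ, C⁆ := by
  simp only [minner, Ring.lie_def, Matrix.transpose_sub, Matrix.transpose_mul,
    Matrix.transpose_transpose, Matrix.sub_mul, Matrix.mul_sub, Matrix.trace_sub]
  rw [← Matrix.mul_assoc, ← Matrix.mul_assoc, Matrix.trace_mul_cycle Y Cᵀ X]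

lemma minner_transpose (X W : Mat n) : minner Xᵀ W = minner X Wᵀ := by
  rw [minner, minner, Matrix.transpose_transpose, ← Matrix.transpose_mul,
    Matrix.trace_transpose, Matrix.trace_mul_comm]

lemma minner_zero_right (A : Mat n) : minner A 0 = 0 := by simp [minner]

/-- Frobenius inner product core on a Lie subalgebra of matrices. -/
def matCore (S : LieSubalgebra ℝ (Mat n)) : InnerProductSpace.Core ℝ S where
  inner x y := minner (x : Mat n) (y : Mat n)
  conj_inner_symm x y := by simpa using minner_comm (y : Mat n) (x : Mat n)
  re_inner_nonneg x := by simpa using minner_self_nonneg (x : Mat n)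
  add_left x y z := by simpa using minner_add_left (x : Mat n) y z
  smul_left x y r := by simpa using minner_smul_left r (x : Mat n) y
  definite x h := Subtype.ext (by
    simp only [ZeroMemClass.coe_zero]
    exact eq_zero_of_minner_self (by simpa using h))

end Stmt0Aux

open Stmt0Aux in
/-- Let 𝔊 be a self-adjoint Lie subalgebra of M(n,ℝ), Z(𝔊) its center and
𝔊₀ the orthogonal complement of Z(𝔊) in 𝔊 w.r.t. the canonical inner product. Then
(1) 𝔊 = Z(𝔊) ⊕ 𝔊₀, (2) Z(𝔊) and 𝔊₀ are self-adjoint ideals of 𝔊, and (3) 𝔊₀ is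
semisimple (its Killing form is nondegenerate). -/
theorem stmt0 {n : ℕ} (𝔊 : LieSubalgebra ℝ (Mat n))
    (hsa : ∀ X ∈ 𝔊, Xᵀ ∈ 𝔊)
    (Z G₀ : Set (Mat n))
    (hZ : Z = {X : Mat n | X ∈ 𝔊 ∧ ∀ Y ∈ 𝔊, ⁅X, Y⁆ = 0})
    (hG₀ : G₀ = {X : Mat n | X ∈ 𝔊 ∧ ∀ W ∈ Z, minner X W = 0}) :
    (∀ X ∈ 𝔊, ∃! p : Mat n × Mat n, p.1 ∈ Z ∧ p.2 ∈ G₀ ∧ X = p.1 + p.2)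
    ∧ ((∀ X ∈ Z, Xᵀ ∈ Z) ∧ (∀ X ∈ G₀, Xᵀ ∈ G₀)
        ∧ (∀ X ∈ 𝔊, ∀ W ∈ Z, ⁅X, W⁆ ∈ Z) ∧ (∀ X ∈ 𝔊, ∀ W ∈ G₀, ⁅X, W⁆ ∈ G₀))
    ∧ (∀ H : LieSubalgebra ℝ (Mat n), (H : Set (Mat n)) = G₀ →
        (killingForm ℝ H).Nondegenerate) := by
  -- membership characterizations
  have hZmem : ∀ {X : Mat n}, X ∈ Z ↔ X ∈ 𝔊 ∧ ∀ Y ∈ 𝔊, ⁅X, Y⁆ = 0 := by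
    intro X; rw [hZ]; exact Iff.rfl
  have hG₀mem : ∀ {X : Mat n}, X ∈ G₀ ↔ X ∈ 𝔊 ∧ ∀ W ∈ Z, minner X W = 0 := by
    intro X; rw [hG₀]; exact Iff.rfl
  -- Z and G₀ are closed under subtraction
  have hZsub : ∀ A ∈ Z, ∀ B ∈ Z, A - B ∈ Z := by
    intro A hA B hB
    obtain ⟨hA1, hA2⟩ := hZmem.mp hA; obtain ⟨hB1, hB2⟩ := hZmem.mp hB
    exact hZmem.mpr ⟨sub_mem hA1 hB1, fun Y hY => by rw [sub_lie, hA2 Y hY, hB2 Y hY, sub_zero]⟩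
  have hG₀sub : ∀ A ∈ G₀, ∀ B ∈ G₀, A - B ∈ G₀ := by
    intro A hA B hB
    obtain ⟨hA1, hA2⟩ := hG₀mem.mp hA; obtain ⟨hB1, hB2⟩ := hG₀mem.mp hB
    exact hG₀mem.mpr ⟨sub_mem hA1 hB1,
      fun W hW => by rw [minner_sub_left, hA2 W hW, hB2 W hW, sub_zero]⟩
  have hZG₀ : ∀ D ∈ Z, D ∈ G₀ → D = 0 := by
    intro D hD hD'
    exact eq_zero_of_minner_self ((hG₀mem.mp hD').2 D hD)
  -- Part 2 pieces
  have p2a : ∀ X ∈ Z, Xᵀ ∈ Z := by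
    intro X hX
    obtain ⟨hX1, hX2⟩ := hZmem.mp hX
    refine hZmem.mpr ⟨hsa X hX1, fun Y hY => ?_⟩
    have h := hX2 Yᵀ (hsa Y hY)
    have : ⁅X, Yᵀ⁆ᵀ = (0 : Mat n)ᵀ := congrArg Matrix.transpose h
    simp only [Ring.lie_def, Matrix.transpose_sub, Matrix.transpose_mul,
      Matrix.transpose_transpose, Matrix.transpose_zero] at this ⊢
    linear_combination (norm := abel) -this
  have p2b : ∀ X ∈ G₀, Xᵀ ∈ G₀ := by
    intro X hX
    obtain ⟨hX1, hX2⟩ := hG₀mem.mp hX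
    refine hG₀mem.mpr ⟨hsa X hX1, fun W hW => ?_⟩
    rw [minner_transpose]
    exact hX2 Wᵀ (p2a W hW)
  have p2c : ∀ X ∈ 𝔊, ∀ W ∈ Z, ⁅X, W⁆ ∈ Z := by
    intro X hX W hW
    obtain ⟨hW1, hW2⟩ := hZmem.mp hW
    have : ⁅X, W⁆ = 0 := by
      have := hW2 X hX
      rw [← lie_skew, this, neg_zero]
    rw [this]
    exact hZmem.mpr ⟨zero_mem _, fun Y _ => zero_lie Y⟩
  have p2d : ∀ X ∈ 𝔊, ∀ W ∈ G₀, ⁅X, W⁆ ∈ G₀ := by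
    intro X hX W hW
    obtain ⟨hW1, hW2⟩ := hG₀mem.mp hW
    refine hG₀mem.mpr ⟨𝔊.lie_mem hX hW1, fun V hV => ?_⟩
    rw [minner_lie_left]
    have : ⁅Xᵀ, V⁆ = 0 := by
      have := (hZmem.mp hV).2 Xᵀ (hsa X hX)
      rw [← lie_skew, this, neg_zero]
    rw [this, minner_zero_right]
  -- Part 1: decomposition, via orthogonal projection in 𝔊
  letI : NormedAddCommGroup 𝔊 := (matCore 𝔊).toNormedAddCommGroup
  letI : InnerProductSpace ℝ 𝔊 := InnerProductSpace.ofCore _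
  have hinner : ∀ u v : 𝔊, (inner ℝ u v : ℝ) = minner (u : Mat n) (v : Mat n) := fun _ _ => rfl
  let Zsub : Submodule ℝ 𝔊 :=
    { carrier := {x : 𝔊 | ∀ Y ∈ 𝔊, ⁅(x : Mat n), Y⁆ = 0}
      add_mem' := by
        intro a b ha hb Y hY
        show ⁅((a + b : 𝔊) : Mat n), Y⁆ = 0
        push_cast
        rw [add_lie, ha Y hY, hb Y hY, add_zero]
      zero_mem' := by intro Y hY; show ⁅((0 : 𝔊) : Mat n), Y⁆ = 0; push_cast; exact zero_lie Y
      smul_mem' := by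
        intro r a ha Y hY
        have hco : ((r • a : 𝔊) : Mat n) = r • (a : Mat n) := rfl
        show ⁅((r • a : 𝔊) : Mat n), Y⁆ = 0
        rw [hco, smul_lie, ha Y hY, smul_zero] }
  have decomp : ∀ X ∈ 𝔊, ∃ p : Mat n × Mat n, p.1 ∈ Z ∧ p.2 ∈ G₀ ∧ X = p.1 + p.2 := by
    intro X hX
    obtain ⟨y, hy, z, hz, hsum⟩ := Zsub.exists_add_mem_mem_orthogonal (⟨X, hX⟩ : 𝔊)
    refine ⟨((y : Mat n), (z : Mat n)), hZmem.mpr ⟨y.2, hy⟩, hG₀mem.mpr ⟨z.2, ?_⟩, ?_⟩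
    · intro W hW
      obtain ⟨hW1, hW2⟩ := hZmem.mp hW
      have hu : (⟨W, hW1⟩ : 𝔊) ∈ Zsub := hW2
      have h0 : (inner ℝ (⟨W, hW1⟩ : 𝔊) z : ℝ) = 0 :=
        (Submodule.mem_orthogonal Zsub z).mp hz _ hu
      rw [hinner] at h0
      rw [minner_comm]
      exact h0
    · have := congrArg (Subtype.val) hsum
      simpa using this
  refine ⟨?_, ⟨p2a, p2b, p2c, p2d⟩, ?_⟩
  · intro X hX
    obtain ⟨p, hp1, hp2, hp3⟩ := decomp X hX
    refine ⟨p, ⟨hp1, hp2, hp3⟩, ?_⟩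
    rintro q ⟨hq1, hq2, hq3⟩
    have hd : q.1 - p.1 = p.2 - q.2 :=
      sub_eq_sub_iff_add_eq_add.mpr (by rw [← hq3, hp3, add_comm])
    have hdZ : q.1 - p.1 ∈ Z := hZsub _ hq1 _ hp1
    have hdG : q.1 - p.1 ∈ G₀ := hd ▸ hG₀sub _ hp2 _ hq2
    have h0 : q.1 - p.1 = 0 := hZG₀ _ hdZ hdG
    have h1 : q.1 = p.1 := sub_eq_zero.mp h0
    have h2 : q.2 = p.2 := by
      rw [h0] at hd
      exact (sub_eq_zero.mp hd.symm).symm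
    exact Prod.ext h1 h2
  -- Part 3: semisimplicity of G₀
  intro H hH
  letI : NormedAddCommGroup H := (matCore H).toNormedAddCommGroup
  letI : InnerProductSpace ℝ H := InnerProductSpace.ofCore _
  have hinnerH : ∀ u v : H, (inner ℝ u v : ℝ) = minner (u : Mat n) (v : Mat n) := fun _ _ => rfl
  refine LinearMap.BilinForm.Nondegenerate.ofSeparatingLeft ?_
  intro x hx
  have hxG : (x : Mat n) ∈ G₀ := by rw [← hH]; exact x.2
  have hxTG : (x : Mat n)ᵀ ∈ G₀ := p2b _ hxG
  have hxTH : (x : Mat n)ᵀ ∈ H := by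
    have : (x : Mat n)ᵀ ∈ (H : Set (Mat n)) := by rw [hH]; exact hxTG
    exact this
  set xT : H := ⟨(x : Mat n)ᵀ, hxTH⟩ with hxT
  have h0 : LinearMap.trace ℝ H
      (LieAlgebra.ad ℝ H x ∘ₗ LieAlgebra.ad ℝ H xT) = 0 := by
    have := hx xT
    rwa [killingForm_apply_apply] at this
  set f : H →ₗ[ℝ] H := LieAlgebra.ad ℝ H x ∘ₗ LieAlgebra.ad ℝ H xT with hf
  let b := stdOrthonormalBasis ℝ H
  have htr : LinearMap.trace ℝ H f =
      ∑ i, minner ((b i : Mat n)) ((f (b i) : Mat n)) := by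
    rw [LinearMap.trace_eq_matrix_trace ℝ b.toBasis f, Matrix.trace]
    refine Finset.sum_congr rfl fun i _ => ?_
    rw [Matrix.diag_apply, LinearMap.toMatrix_apply,
      OrthonormalBasis.coe_toBasis_repr_apply, OrthonormalBasis.repr_apply_apply,
      OrthonormalBasis.coe_toBasis, hinnerH]
  have hterm : ∀ i, minner ((b i : Mat n)) ((f (b i) : Mat n)) =
      minner ⁅(x : Mat n)ᵀ, (b i : Mat n)⁆ ⁅(x : Mat n)ᵀ, (b i : Mat n)⁆ := by
    intro i
    have hco : (f (b i) : Mat n) = ⁅(x : Mat n), ⁅(x : Mat n)ᵀ, (b i : Mat n)⁆⁆ := by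
      simp only [hf, LinearMap.comp_apply, LieAlgebra.ad_apply,
        LieSubalgebra.coe_bracket, hxT]
    rw [hco, minner_comm, minner_lie_left]
  rw [htr] at h0
  have hw0 : ∀ i, ⁅(x : Mat n)ᵀ, (b i : Mat n)⁆ = 0 := by
    intro i
    have hnn : ∀ i ∈ Finset.univ, (0:ℝ) ≤ minner ((b i : Mat n)) ((f (b i) : Mat n)) := by
      intro i _; rw [hterm i]; exact minner_self_nonneg _
    have := (Finset.sum_eq_zero_iff_of_nonneg hnn).mp h0 i (Finset.mem_univ i)
    rw [hterm i] at this
    exact eq_zero_of_minner_self this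
  -- the bracket with xᵀ kills all of G₀
  have hbk : ∀ v : H, ⁅(x : Mat n)ᵀ, (v : Mat n)⁆ = 0 := by
    intro v
    let g : H →ₗ[ℝ] Mat n :=
      { toFun := fun u => ⁅(x : Mat n)ᵀ, (u : Mat n)⁆
        map_add' := fun a c => by
          have hco : ((a + c : H) : Mat n) = (a : Mat n) + (c : Mat n) := rfl
          show ⁅(x : Mat n)ᵀ, ((a + c : H) : Mat n)⁆ =
            ⁅(x : Mat n)ᵀ, (a : Mat n)⁆ + ⁅(x : Mat n)ᵀ, (c : Mat n)⁆
          rw [hco, lie_add]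
        map_smul' := fun r a => by
          have hco : ((r • a : H) : Mat n) = r • (a : Mat n) := rfl
          show ⁅(x : Mat n)ᵀ, ((r • a : H) : Mat n)⁆ = r • ⁅(x : Mat n)ᵀ, (a : Mat n)⁆
          rw [hco, lie_smul] }
    have hg : g = 0 := b.toBasis.ext fun i => by
      simpa [g, OrthonormalBasis.coe_toBasis] using hw0 i
    have := congrArg (fun (m : H →ₗ[ℝ] Mat n) => m v) hg
    simpa [g] using this
  -- so xᵀ is central in 𝔊
  have hxTZ : (x : Mat n)ᵀ ∈ Z := by
    refine hZmem.mpr ⟨hsa _ (hG₀mem.mp hxG).1, fun Y hY => ?_⟩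
    obtain ⟨p, hp1, hp2, hp3⟩ := decomp Y hY
    have hb1 : ⁅(x : Mat n)ᵀ, p.1⁆ = 0 := by
      have := (hZmem.mp hp1).2 ((x : Mat n)ᵀ) (hsa _ (hG₀mem.mp hxG).1)
      rw [← lie_skew, this, neg_zero]
    have hb2 : ⁅(x : Mat n)ᵀ, p.2⁆ = 0 := by
      have hp2H : p.2 ∈ H := by
        have : p.2 ∈ (H : Set (Mat n)) := by rw [hH]; exact hp2
        exact this
      exact hbk ⟨p.2, hp2H⟩
    rw [hp3, lie_add, hb1, hb2, add_zero]
  have hxT0 : (x : Mat n)ᵀ = 0 := hZG₀ _ hxTZ hxTG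
  have : (x : Mat n) = 0 := by
    have := congrArg Matrix.transpose hxT0
    simpa using this
  exact Subtype.ext this

end
end

section
/- Let G be a closed, connected, self-adjoint, noncompact subgroup of GL(n,ℝ) that acts irreducibly on ℝⁿ, and suppose the Lie algebra 𝔊 of G is not semisimple. Then at least one of the following holds: (1) the zero vector lies in the closure of the orbit G(v) for every v ∈ ℝⁿ; (2) there exists a skew-symmetric matrix J with J² = −I such that the center of 𝔊 equals ℝ·J. -/
open Matrix Filter Topology

attribute [local instance 100] LieRing.ofAssociativeRing

noncomputable section

namespace EJ

variable {n : ℕ} {G : Subgroup (GL (Fin n) ℝ)}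

theorem mexp_def {A : Mat n} : mexp A = NormedSpace.exp A := rfl

theorem mexp_add_of_commute {A B : Mat n} (h : Commute A B) :
    mexp (A + B) = mexp A * mexp B := Matrix.exp_add_of_commute A B h

theorem mexp_zero : mexp (0 : Mat n) = 1 := NormedSpace.exp_zero

theorem mexp_mul_neg (A : Mat n) : mexp A * mexp (-A) = 1 := by
  rw [← mexp_add_of_commute (Commute.neg_right (Commute.refl A)), add_neg_cancel, mexp_zero]

theorem mexp_neg_mul (A : Mat n) : mexp (-A) * mexp A = 1 := by
  rw [← mexp_add_of_commute (Commute.neg_left (Commute.refl A)), neg_add_cancel, mexp_zero]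

/-- The exponential as a unit. -/
def expUnit (A : Mat n) : GL (Fin n) ℝ :=
  { val := mexp A, inv := mexp (-A), val_inv := mexp_mul_neg A, inv_val := mexp_neg_mul A }

@[simp] theorem val_expUnit (A : Mat n) : ((expUnit A : GL (Fin n) ℝ) : Mat n) = mexp A := rfl

@[simp] theorem val_expUnit_inv (A : Mat n) :
    (((expUnit A)⁻¹ : GL (Fin n) ℝ) : Mat n) = mexp (-A) := rfl

theorem expUnit_zero : expUnit (0 : Mat n) = 1 := by
  ext; simp [mexp_zero]

theorem expUnit_inv (A : Mat n) : (expUnit A)⁻¹ = expUnit (-A) :=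
  Units.ext rfl

theorem expUnit_pow (A : Mat n) (m : ℕ) : expUnit A ^ m = expUnit ((m : ℕ) • A) := by
  ext
  rw [Units.val_pow_eq_pow_val, val_expUnit, val_expUnit, mexp_def, mexp_def,
    Matrix.exp_nsmul m A]

theorem mem_lieAlg_iff {X : Mat n} : X ∈ lieAlgOf G ↔ ∀ t : ℝ, expUnit (t • X) ∈ G := by
  constructor
  · intro h t
    obtain ⟨g, hg, hval⟩ := h t
    have : g = expUnit (t • X) := Units.ext hval
    rwa [this] at hg
  · intro h t
    exact ⟨expUnit (t • X), h t, rfl⟩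

theorem zero_mem_lieAlg : (0 : Mat n) ∈ lieAlgOf G := by
  rw [mem_lieAlg_iff]
  intro t
  rw [smul_zero, expUnit_zero]
  exact G.one_mem

theorem smul_mem_lieAlg {X : Mat n} (c : ℝ) (hX : X ∈ lieAlgOf G) : c • X ∈ lieAlgOf G := by
  rw [mem_lieAlg_iff] at hX ⊢
  intro t
  rw [smul_smul]
  exact hX (t * c)

theorem neg_mem_lieAlg {X : Mat n} (hX : X ∈ lieAlgOf G) : -X ∈ lieAlgOf G := by
  simpa using smul_mem_lieAlg (-1) hX

theorem mexp_mem_M {X : Mat n} (hX : X ∈ lieAlgOf G) (t : ℝ) :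
    ∃ g ∈ G, (g : Mat n) = mexp (t • X) := hX t

theorem transpose_mem_lieAlg (hsa : IsSelfAdjointSubgroup G) {X : Mat n}
    (hX : X ∈ lieAlgOf G) : Xᵀ ∈ lieAlgOf G := by
  intro t
  obtain ⟨g, hg, hval⟩ := hX t
  obtain ⟨h, hh, hvalh⟩ := hsa g hg
  refine ⟨h, hh, ?_⟩
  rw [hvalh, hval, mexp_def, mexp_def, ← Matrix.exp_transpose, transpose_smul]

theorem conj_mem_lieAlg {g : GL (Fin n) ℝ} (hg : g ∈ G) {X : Mat n} (hX : X ∈ lieAlgOf G) :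
    (g : Mat n) * X * ((g⁻¹ : GL (Fin n) ℝ) : Mat n) ∈ lieAlgOf G := by
  rw [mem_lieAlg_iff] at hX ⊢
  intro t
  have key : mexp (t • ((g : Mat n) * X * ((g⁻¹ : GL (Fin n) ℝ) : Mat n)))
      = (g : Mat n) * mexp (t • X) * ((g⁻¹ : GL (Fin n) ℝ) : Mat n) := by
    have : t • ((g : Mat n) * X * ((g⁻¹ : GL (Fin n) ℝ) : Mat n))
        = (g : Mat n) * (t • X) * ((g⁻¹ : GL (Fin n) ℝ) : Mat n) := by
      simp [mul_smul_comm, smul_mul_assoc]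
    rw [this, mexp_def]
    exact Matrix.exp_units_conj g (t • X)
  have : g * expUnit (t • X) * g⁻¹ = expUnit (t • ((g : Mat n) * X * ((g⁻¹ : GL (Fin n) ℝ) : Mat n))) := by
    ext
    simp only [Units.val_mul, val_expUnit]
    rw [key]
  rw [← this]
  exact G.mul_mem (G.mul_mem hg (hX t)) (G.inv_mem hg)


section Topo
attribute [local instance] Matrix.linftyOpNormedRing Matrix.linftyOpNormedAlgebra

theorem continuous_mexp : Continuous (mexp : Mat n → Mat n) := NormedSpace.exp_continuous

theorem continuous_expUnit_smul (t : ℝ) :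
    Continuous (fun X : Mat n => (expUnit (t • X) : GL (Fin n) ℝ)) := by
  rw [Units.continuous_iff]
  constructor
  · exact continuous_mexp.comp (continuous_const_smul t)
  · show Continuous fun X : Mat n => mexp (-(t • X))
    exact continuous_mexp.comp (continuous_const_smul t).neg

theorem isClosed_lieAlg (hclosed : IsClosed (G : Set (GL (Fin n) ℝ))) :
    IsClosed (lieAlgOf G) := by
  have : lieAlgOf G = ⋂ t : ℝ,
      (fun X : Mat n => (expUnit (t • X) : GL (Fin n) ℝ)) ⁻¹' (G : Set (GL (Fin n) ℝ)) := by
    ext X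
    simp only [Set.mem_iInter, Set.mem_preimage, SetLike.mem_coe]
    exact mem_lieAlg_iff
  rw [this]
  exact isClosed_iInter fun t => hclosed.preimage (continuous_expUnit_smul t)

theorem mem_of_tendsto_units (hclosed : IsClosed (G : Set (GL (Fin n) ℝ)))
    {ι : Type} {l : Filter ι} [l.NeBot] {f : ι → GL (Fin n) ℝ}
    (hf : ∀ᶠ i in l, f i ∈ G) {u : GL (Fin n) ℝ}
    (hval : Tendsto (fun i => ((f i) : Mat n)) l (𝓝 ((u : Mat n)))) : u ∈ G := by
  have hinv : Tendsto (fun i => (((f i)⁻¹ : GL (Fin n) ℝ) : Mat n)) l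
      (𝓝 (((u⁻¹ : GL (Fin n) ℝ) : Mat n))) := by
    have h1 : ContinuousAt Ring.inverse ((u : Mat n)) := NormedRing.inverse_continuousAt u
    have h2 := (h1.tendsto).comp hval
    simpa only [Function.comp_def, Ring.inverse_unit] using h2
  have hglf : Tendsto f l (𝓝 u) := by
    rw [Units.isEmbedding_embedProduct.isInducing.tendsto_nhds_iff]
    have : Tendsto (fun i => (((f i) : Mat n), MulOpposite.op (((f i)⁻¹ : GL (Fin n) ℝ) : Mat n)))
        l (𝓝 (((u : Mat n)), MulOpposite.op ((u⁻¹ : GL (Fin n) ℝ) : Mat n))) :=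
      hval.prodMk_nhds (MulOpposite.continuous_op.tendsto _ |>.comp hinv)
    exact this
  exact hclosed.mem_of_tendsto hglf hf

theorem dir_mem (hclosed : IsClosed (G : Set (GL (Fin n) ℝ)))
    {s : ℕ → ℝ} {Wk : ℕ → Mat n} {W : Mat n}
    (hs : ∀ᶠ k in atTop, 0 < s k) (hs0 : Tendsto s atTop (𝓝 0))
    (hW : Tendsto Wk atTop (𝓝 W))
    (hmem : ∀ᶠ k in atTop, expUnit (s k • Wk k) ∈ G) : W ∈ lieAlgOf G := by
  rw [mem_lieAlg_iff]
  have key : ∀ t : ℝ, 0 ≤ t → expUnit (t • W) ∈ G := by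
    intro t ht
    set m : ℕ → ℕ := fun k => ⌊t / s k⌋₊ with hm
    have hms : Tendsto (fun k => (m k : ℝ) * s k) atTop (𝓝 t) := by
      have hlow : Tendsto (fun k => t - s k) atTop (𝓝 t) := by
        simpa using tendsto_const_nhds.sub hs0
      apply tendsto_of_tendsto_of_tendsto_of_le_of_le' hlow (tendsto_const_nhds (x := t))
      · filter_upwards [hs] with k hk
        have h1 : t / s k - 1 < (m k : ℝ) := Nat.sub_one_lt_floor _
        have := mul_lt_mul_of_pos_right h1 hk
        rw [sub_mul, one_mul, div_mul_cancel₀ _ (ne_of_gt hk)] at this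
        linarith
      · filter_upwards [hs] with k hk
        have h1 : (m k : ℝ) ≤ t / s k := Nat.floor_le (div_nonneg ht hk.le)
        have := mul_le_mul_of_nonneg_right h1 hk.le
        rwa [div_mul_cancel₀ _ (ne_of_gt hk)] at this
    have hlim : Tendsto (fun k => (m k : ℝ) • (s k • Wk k)) atTop (𝓝 (t • W)) := by
      have : ∀ k, (m k : ℝ) • (s k • Wk k) = ((m k : ℝ) * s k) • Wk k := by
        intro k; rw [smul_smul]
      simp only [this]
      exact hms.smul hW
    have hval : Tendsto (fun k => ((expUnit (s k • Wk k) ^ (m k) : GL (Fin n) ℝ) : Mat n))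
        atTop (𝓝 ((expUnit (t • W) : GL (Fin n) ℝ) : Mat n)) := by
      have heq : ∀ k, ((expUnit (s k • Wk k) ^ (m k) : GL (Fin n) ℝ) : Mat n)
          = mexp ((m k : ℝ) • (s k • Wk k)) := by
        intro k
        rw [expUnit_pow, val_expUnit, Nat.cast_smul_eq_nsmul]
      simp only [heq, val_expUnit]
      exact (continuous_mexp.tendsto _).comp hlim
    refine mem_of_tendsto_units hclosed ?_ hval
    filter_upwards [hmem] with k hk
    exact pow_mem hk (m k)
  intro t
  rcases le_or_gt 0 t with ht | ht
  · exact key t ht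
  · have := key (-t) (by linarith)
    rw [neg_smul] at this
    rw [← neg_neg (t • W), ← expUnit_inv]
    exact G.inv_mem this

theorem deriv_mem (hclosed : IsClosed (G : Set (GL (Fin n) ℝ)))
    {Z : ℝ → Mat n} {W : Mat n} (hZ0 : Z 0 = 0) (hd : HasDerivAt Z W 0)
    (hmem : ∀ᶠ t in 𝓝[>] (0:ℝ), expUnit (Z t) ∈ G) : W ∈ lieAlgOf G := by
  set s : ℕ → ℝ := fun k => ((k : ℝ) + 1)⁻¹ with hsdef
  have hspos : ∀ k, 0 < s k := fun k => by positivity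
  have hs0 : Tendsto s atTop (𝓝 0) := tendsto_one_div_add_atTop_nhds_zero_nat.congr (by
    intro k; simp [hsdef, one_div])
  have hsW : Tendsto s atTop (𝓝[>] (0:ℝ)) := by
    apply tendsto_nhdsWithin_of_tendsto_nhds_of_eventually_within _ hs0
    exact Eventually.of_forall fun k => hspos k
  have hslope : Tendsto (fun k => (s k)⁻¹ • Z (s k)) atTop (𝓝 W) := by
    have h1 := hasDerivAt_iff_tendsto_slope.mp hd
    have h2 : Tendsto s atTop (𝓝[≠] (0:ℝ)) := by
      apply tendsto_nhdsWithin_of_tendsto_nhds_of_eventually_within _ hs0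
      exact Eventually.of_forall fun k => (hspos k).ne'
    have h3 := h1.comp h2
    apply h3.congr
    intro k
    simp [slope_def_module, hZ0]
  refine dir_mem hclosed (Eventually.of_forall hspos) hs0 hslope ?_
  have : ∀ᶠ k in atTop, expUnit (Z (s k)) ∈ G := hsW.eventually hmem
  filter_upwards [this] with k hk
  rwa [smul_inv_smul₀ (hspos k).ne']


theorem hasDerivAt_mexp_smul (A : Mat n) : HasDerivAt (fun t : ℝ => mexp (t • A)) A 0 := by
  have := hasDerivAt_exp_smul_const (𝕂 := ℝ) A (0 : ℝ)
  simp [mexp_def, NormedSpace.exp_zero] at this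
  exact this

theorem add_mem_lieAlg (hclosed : IsClosed (G : Set (GL (Fin n) ℝ)))
    {X Y : Mat n} (hX : X ∈ lieAlgOf G) (hY : Y ∈ lieAlgOf G) :
    X + Y ∈ lieAlgOf G := by
  have hexp : HasStrictFDerivAt (NormedSpace.exp : Mat n → Mat n)
      ((ContinuousLinearEquiv.refl ℝ (Mat n) : Mat n ≃L[ℝ] Mat n) : Mat n →L[ℝ] Mat n) 0 :=
    hasStrictFDerivAt_exp_zero
  set ψ : Mat n → Mat n := hexp.localInverse _ _ _ with hψdef
  have hψ1 : ψ 1 = 0 := by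
    have := hexp.localInverse_apply_image
    rwa [NormedSpace.exp_zero] at this
  have hψd : HasStrictFDerivAt ψ
      ((ContinuousLinearEquiv.refl ℝ (Mat n)).symm : Mat n →L[ℝ] Mat n) 1 := by
    have := hexp.to_localInverse
    rwa [NormedSpace.exp_zero] at this
  have hψr : ∀ᶠ y in 𝓝 (1 : Mat n), NormedSpace.exp (ψ y) = y := by
    have := hexp.eventually_right_inverse
    rwa [NormedSpace.exp_zero] at this
  set γ : ℝ → Mat n := fun t => mexp (t • X) * mexp (t • Y) with hγdef
  have hγ0 : γ 0 = 1 := by simp [hγdef, mexp_zero]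
  have hγd : HasDerivAt γ (X + Y) 0 := by
    have h1 := hasDerivAt_mexp_smul X
    have h2 := hasDerivAt_mexp_smul Y
    have := h1.mul h2
    simp [mexp_zero] at this
    exact this
  have hZd : HasDerivAt (fun t => ψ (γ t)) (X + Y) 0 := by
    have hf : HasFDerivAt ψ
        ((ContinuousLinearEquiv.refl ℝ (Mat n)).symm : Mat n →L[ℝ] Mat n) (γ 0) := by
      rw [hγ0]; exact hψd.hasFDerivAt
    have := hf.comp_hasDerivAt 0 hγd
    simp at this
    exact this
  have hZ0 : ψ (γ 0) = 0 := by rw [hγ0, hψ1]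
  refine deriv_mem hclosed hZ0 hZd ?_
  have hγc : Tendsto γ (𝓝 0) (𝓝 1) := by
    rw [← hγ0]; exact hγd.continuousAt
  have hev : ∀ᶠ t in 𝓝 (0:ℝ), NormedSpace.exp (ψ (γ t)) = γ t := hγc.eventually hψr
  have hev' : ∀ᶠ t in 𝓝[>] (0:ℝ), NormedSpace.exp (ψ (γ t)) = γ t :=
    hev.filter_mono nhdsWithin_le_nhds
  filter_upwards [hev'] with t ht
  have hu : expUnit (ψ (γ t)) = expUnit (t • X) * expUnit (t • Y) := by
    apply Units.ext
    rw [Units.val_mul, val_expUnit, val_expUnit, val_expUnit, mexp_def, ht]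
  rw [hu]
  exact G.mul_mem (mem_lieAlg_iff.mp hX t) (mem_lieAlg_iff.mp hY t)

theorem sub_mem_lieAlg (hclosed : IsClosed (G : Set (GL (Fin n) ℝ)))
    {X Y : Mat n} (hX : X ∈ lieAlgOf G) (hY : Y ∈ lieAlgOf G) :
    X - Y ∈ lieAlgOf G := by
  rw [sub_eq_add_neg]
  exact add_mem_lieAlg hclosed hX (neg_mem_lieAlg hY)

theorem mul_sub_mul_mem_lieAlg (hclosed : IsClosed (G : Set (GL (Fin n) ℝ)))
    {X Y : Mat n} (hX : X ∈ lieAlgOf G) (hY : Y ∈ lieAlgOf G) :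
    Y * X - X * Y ∈ lieAlgOf G := by
  set c : ℝ → Mat n := fun t => mexp (t • Y) * X * mexp (t • (-Y)) with hcdef
  have hc0 : c 0 = X := by simp [hcdef, mexp_zero]
  have hcmem : ∀ t, c t ∈ lieAlgOf G := by
    intro t
    have hg : expUnit (t • Y) ∈ G := mem_lieAlg_iff.mp hY t
    have := conj_mem_lieAlg hg hX
    rw [expUnit_inv, val_expUnit, val_expUnit] at this
    rw [hcdef]
    simpa [smul_neg, neg_smul] using this
  have hcd : HasDerivAt c (Y * X - X * Y) 0 := by
    have h1 := (hasDerivAt_mexp_smul Y).mul_const X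
    have h2 := hasDerivAt_mexp_smul (-Y)
    have := h1.mul h2
    simp only [mexp_zero, zero_smul] at this ⊢
    refine this.congr_deriv ?_
    noncomm_ring
  -- difference quotients stay in the (closed) set lieAlgOf G
  have hclosedSet := isClosed_lieAlg (G := G) hclosed
  set s : ℕ → ℝ := fun k => ((k : ℝ) + 1)⁻¹ with hsdef
  have hspos : ∀ k, 0 < s k := fun k => by positivity
  have hs0 : Tendsto s atTop (𝓝 0) := tendsto_one_div_add_atTop_nhds_zero_nat.congr (by
    intro k; simp [hsdef, one_div])
  have h2 : Tendsto s atTop (𝓝[≠] (0:ℝ)) := by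
    apply tendsto_nhdsWithin_of_tendsto_nhds_of_eventually_within _ hs0
    exact Eventually.of_forall fun k => (hspos k).ne'
  have hslope : Tendsto (fun k => (s k)⁻¹ • (c (s k) - X)) atTop (𝓝 (Y * X - X * Y)) := by
    have h1 := hasDerivAt_iff_tendsto_slope.mp hcd
    have h3 := h1.comp h2
    apply h3.congr
    intro k
    simp [slope_def_module, hc0]
  refine hclosedSet.mem_of_tendsto hslope ?_
  apply Eventually.of_forall
  intro k
  exact smul_mem_lieAlg _ (sub_mem_lieAlg hclosed (hcmem (s k)) hX)

theorem bracket_mem_lieAlg (hclosed : IsClosed (G : Set (GL (Fin n) ℝ)))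
    {X Y : Mat n} (hX : X ∈ lieAlgOf G) (hY : Y ∈ lieAlgOf G) :
    X * Y - Y * X ∈ lieAlgOf G := by
  have := mul_sub_mul_mem_lieAlg hclosed hY hX
  exact this

end Topo

/-- The Lie algebra of `G` as a `LieSubalgebra`, assuming `G` is closed. -/
def lieSubalg (G : Subgroup (GL (Fin n) ℝ)) (hclosed : IsClosed (G : Set (GL (Fin n) ℝ))) :
    LieSubalgebra ℝ (Mat n) where
  carrier := lieAlgOf G
  add_mem' := fun ha hb => add_mem_lieAlg hclosed ha hb
  zero_mem' := zero_mem_lieAlg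
  smul_mem' := fun c _ h => smul_mem_lieAlg c h
  lie_mem' := fun ha hb => bracket_mem_lieAlg hclosed ha hb

@[simp] theorem coe_lieSubalg (hclosed : IsClosed (G : Set (GL (Fin n) ℝ))) :
    ((lieSubalg G hclosed : LieSubalgebra ℝ (Mat n)) : Set (Mat n)) = lieAlgOf G := rfl

section Cartan
attribute [local instance] Matrix.linftyOpNormedRing Matrix.linftyOpNormedAlgebra

/-- Near the identity, every element of `G` is the exponential of an element of its
Lie algebra. -/
theorem exists_exp_nhds (hclosed : IsClosed (G : Set (GL (Fin n) ℝ))) :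
    ∃ V ∈ 𝓝 (1 : Mat n), ∀ A ∈ V, (∃ g ∈ G, (g : Mat n) = A) →
      ∃ X ∈ lieAlgOf G, mexp X = A := by
  classical
  by_contra hcon
  push_neg at hcon
  -- the Lie algebra as a submodule, and a complement
  set 𝕘 : Submodule ℝ (Mat n) := (lieSubalg G hclosed).toSubmodule with h𝕘
  obtain ⟨Wc, hWc⟩ := Submodule.exists_isCompl 𝕘
  set π₁ : Mat n →ₗ[ℝ] Mat n := 𝕘.subtype ∘ₗ (𝕘.linearProjOfIsCompl Wc hWc) with hπ₁
  have hπ₁mem : ∀ A, π₁ A ∈ lieAlgOf G := fun A => ((𝕘.linearProjOfIsCompl Wc hWc) A).2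
  have hπ₂mem : ∀ A, A - π₁ A ∈ Wc := by
    intro A
    have h1 : ((𝕘.linearProjOfIsCompl Wc hWc A : Mat n)) + (Wc.linearProjOfIsCompl 𝕘 hWc.symm A : Mat n) = A :=
      Submodule.projection_add_projection_eq_self hWc A
    have h2 : A - π₁ A = (Wc.linearProjOfIsCompl 𝕘 hWc.symm A : Mat n) := by
      rw [hπ₁]
      simp only [LinearMap.comp_apply, Submodule.subtype_apply]
      linear_combination (norm := module) h1.symm
    rw [h2]
    exact (Wc.linearProjOfIsCompl 𝕘 hWc.symm A).2
  set π₁c : Mat n →L[ℝ] Mat n := LinearMap.toContinuousLinearMap π₁ with hπ₁c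
  have hπ₁capp : ∀ A, π₁c A = π₁ A := fun A => rfl
  set F : Mat n → Mat n := fun A => mexp (π₁c A) * mexp (A - π₁c A) with hF
  have hexp : HasStrictFDerivAt (NormedSpace.exp : Mat n → Mat n)
      (ContinuousLinearMap.id ℝ (Mat n)) 0 := hasStrictFDerivAt_exp_zero
  have h0 : π₁c (0 : Mat n) = 0 := by simp
  have hg1 : HasStrictFDerivAt (fun A : Mat n => mexp (π₁c A)) π₁c 0 := by
    have hexp' := hexp
    rw [← h0] at hexp'
    have := hexp'.comp (0 : Mat n) π₁c.hasStrictFDerivAt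
    exact this
  have hg2 : HasStrictFDerivAt (fun A : Mat n => mexp (A - π₁c A))
      (ContinuousLinearMap.id ℝ (Mat n) - π₁c) 0 := by
    have hlin : HasStrictFDerivAt (fun A : Mat n => A - π₁c A)
        (ContinuousLinearMap.id ℝ (Mat n) - π₁c) 0 :=
      (ContinuousLinearMap.id ℝ (Mat n) - π₁c).hasStrictFDerivAt
    have hexp' := hexp
    have h0' : (0 : Mat n) - π₁c 0 = 0 := by simp
    rw [← h0'] at hexp'
    have := hexp'.comp (0 : Mat n) hlin
    exact this
  have hFd : HasStrictFDerivAt F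
      ((ContinuousLinearEquiv.refl ℝ (Mat n) : Mat n ≃L[ℝ] Mat n) : Mat n →L[ℝ] Mat n) 0 := by
    have hmul := hg1.mul' hg2
    rw [h0] at hmul
    simp only [sub_zero, mexp_zero, one_smul] at hmul
    refine hmul.congr_fderiv ?_
    symm
    refine ContinuousLinearMap.ext fun A => ?_
    show A = (1 : Mat n) * (A - π₁c A) + π₁c A * 1
    noncomm_ring
  set χ : Mat n → Mat n := hFd.localInverse _ _ _ with hχ
  have hF0 : F 0 = 1 := by simp [hF, mexp_zero]
  have hχ1 : χ 1 = 0 := by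
    have := hFd.localInverse_apply_image
    rwa [hF0] at this
  have hχc : Tendsto χ (𝓝 1) (𝓝 0) := by
    have := hFd.localInverse_continuousAt
    rw [hF0] at this
    rw [← hχ1]
    exact this.tendsto
  have hχr : ∀ᶠ y in 𝓝 (1 : Mat n), F (χ y) = y := by
    have := hFd.eventually_right_inverse
    rwa [hF0] at this
  -- pick a sequence of counterexamples tending to 1
  have hseq : ∀ k : ℕ, ∃ A : Mat n, A ∈ Metric.ball (1 : Mat n) (((k:ℝ)+1)⁻¹) ∧
      (∃ g ∈ G, (g : Mat n) = A) ∧ ∀ X ∈ lieAlgOf G, mexp X ≠ A := by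
    intro k
    obtain ⟨A, hA, hGm, hno⟩ := hcon (Metric.ball (1 : Mat n) (((k:ℝ)+1)⁻¹))
      (Metric.ball_mem_nhds _ (by positivity))
    exact ⟨A, hA, hGm, hno⟩
  choose A hAball hAG hAno using hseq
  have hA1 : Tendsto A atTop (𝓝 (1 : Mat n)) := by
    refine tendsto_iff_dist_tendsto_zero.mpr ?_
    apply squeeze_zero (fun k => dist_nonneg)
      (fun k => (le_of_lt (by simpa [Metric.mem_ball] using hAball k)))
    exact tendsto_one_div_add_atTop_nhds_zero_nat.congr (by intro k; simp [one_div])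
  set B : ℕ → Mat n := fun k => χ (A k) with hB
  have hB0 : Tendsto B atTop (𝓝 0) := hχc.comp hA1
  set X : ℕ → Mat n := fun k => π₁c (B k) with hX
  set Y : ℕ → Mat n := fun k => B k - π₁c (B k) with hY
  have hXmem : ∀ k, X k ∈ lieAlgOf G := fun k => hπ₁mem _
  have hYW : ∀ k, Y k ∈ Wc := fun k => hπ₂mem _
  have hY0 : Tendsto Y atTop (𝓝 0) := by
    have hc : Continuous fun A : Mat n => A - π₁c A := continuous_id.sub π₁c.continuous
    have := (hc.tendsto 0).comp hB0
    simp at this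
    exact this
  have hFB : ∀ᶠ k in atTop, mexp (X k) * mexp (Y k) = A k := hA1.eventually hχr
  have hkey : ∀ᶠ k in atTop, expUnit (Y k) ∈ G ∧ Y k ≠ 0 := by
    filter_upwards [hFB] with k hk
    obtain ⟨g, hg, hgval⟩ := hAG k
    have hYne : Y k ≠ 0 := by
      intro h0'
      apply hAno k (X k) (hXmem k)
      rw [← hk, h0', mexp_zero, mul_one]
    have hu : (expUnit (X k))⁻¹ * g = expUnit (Y k) := by
      apply Units.ext
      rw [Units.val_mul, expUnit_inv, val_expUnit, val_expUnit, hgval, ← hk,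
        ← mul_assoc, mexp_neg_mul, one_mul]
    have hXG : expUnit (X k) ∈ G := by
      have := mem_lieAlg_iff.mp (hXmem k) 1
      rwa [one_smul] at this
    have hmemG : (expUnit (X k))⁻¹ * g ∈ G := G.mul_mem (G.inv_mem hXG) hg
    rw [hu] at hmemG
    exact ⟨hmemG, hYne⟩
  -- pass to a subsequence of unit directions
  obtain ⟨N, hN⟩ := eventually_atTop.mp hkey
  set Y' : ℕ → Mat n := fun k => Y (N + k) with hY'
  have hY'0 : Tendsto Y' atTop (𝓝 0) := by
    apply hY0.comp
    apply tendsto_atTop_mono (fun k => Nat.le_add_left k N) tendsto_id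
  have hprop : ∀ k, expUnit (Y' k) ∈ G ∧ Y' k ≠ 0 := fun k => hN (N + k) (Nat.le_add_right N k)
  set d : ℕ → Mat n := fun k => ‖Y' k‖⁻¹ • Y' k with hd
  have hdmem : ∀ k, d k ∈ Metric.sphere (0 : Mat n) 1 := by
    intro k
    have hne : ‖Y' k‖ ≠ 0 := norm_ne_zero_iff.mpr (hprop k).2
    simp only [hd, mem_sphere_iff_norm, sub_zero, norm_smul, norm_inv, norm_norm]
    exact inv_mul_cancel₀ hne
  obtain ⟨V, hVs, φ, hφmono, hφtend⟩ := (isCompact_sphere (0 : Mat n) 1).tendsto_subseq hdmem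
  have hsk : ∀ k, 0 < ‖Y' (φ k)‖ :=
    fun k => norm_pos_iff.mpr (hprop (φ k)).2
  have hs0 : Tendsto (fun k => ‖Y' (φ k)‖) atTop (𝓝 0) := by
    have h1 : Tendsto (fun k => ‖Y' k‖) atTop (𝓝 0) := by
      simpa using hY'0.norm
    exact h1.comp hφmono.tendsto_atTop
  have hVlie : V ∈ lieAlgOf G := by
    apply dir_mem hclosed (Eventually.of_forall hsk) hs0 hφtend
    apply Eventually.of_forall
    intro k
    have heq : ‖Y' (φ k)‖ • (d ∘ φ) k = Y' (φ k) := by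
      simp only [Function.comp_apply, hd]
      rw [smul_inv_smul₀ (hsk k).ne']
    rw [heq]
    exact (hprop (φ k)).1
  have hVW : V ∈ Wc := by
    have hclosedW : IsClosed (Wc : Set (Mat n)) := Submodule.closed_of_finiteDimensional Wc
    exact hclosedW.mem_of_tendsto hφtend
      (Eventually.of_forall fun k => Wc.smul_mem _ (hYW _))
  have hV0 : V = 0 := by
    have hdisj := hWc.disjoint
    exact Submodule.disjoint_def.mp hdisj V hVlie hVW
  have : ‖V‖ = 1 := by simpa [mem_sphere_iff_norm] using hVs
  rw [hV0] at this
  simp at this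

end Cartan

section Conn
attribute [local instance] Matrix.linftyOpNormedRing Matrix.linftyOpNormedAlgebra

theorem commute_G_of_commute_lieAlg (hclosed : IsClosed (G : Set (GL (Fin n) ℝ)))
    (hconn : IsConnected (G : Set (GL (Fin n) ℝ)))
    {T : Mat n} (hT : ∀ X ∈ lieAlgOf G, Commute T X) :
    ∀ g ∈ G, Commute T ((g : GL (Fin n) ℝ) : Mat n) := by
  obtain ⟨V, hV, hVP⟩ := exists_exp_nhds hclosed
  haveI : PreconnectedSpace (G : Set (GL (Fin n) ℝ)) :=
    Subtype.preconnectedSpace hconn.isPreconnected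
  set s : Set (G : Set (GL (Fin n) ℝ)) :=
    {g : (G : Set (GL (Fin n) ℝ)) | Commute T (((g : GL (Fin n) ℝ)) : Mat n)} with hs
  have hval : Continuous (fun g : (G : Set (GL (Fin n) ℝ)) => (((g : GL (Fin n) ℝ)) : Mat n)) :=
    Units.continuous_val.comp continuous_subtype_val
  have hclosedS : IsClosed s :=
    isClosed_eq (continuous_const.mul hval) (hval.mul continuous_const)
  have hopenS : IsOpen s := by
    rw [isOpen_iff_mem_nhds]
    intro g₀ hg₀
    set m : ↥(G : Set (GL (Fin n) ℝ)) → Mat n :=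
      fun g => ((((g₀ : GL (Fin n) ℝ)⁻¹ : GL (Fin n) ℝ)) : Mat n) * (((g : GL (Fin n) ℝ)) : Mat n)
      with hm
    have hmc : Continuous m := continuous_const.mul hval
    have hNopen : IsOpen (m ⁻¹' interior V) := (isOpen_interior).preimage hmc
    have hg₀N : g₀ ∈ m ⁻¹' interior V := by
      have : m g₀ = 1 := by
        rw [hm]
        simp only [← Units.val_mul, inv_mul_cancel, Units.val_one]
      rw [Set.mem_preimage, this]
      exact mem_interior_iff_mem_nhds.mpr hV
    apply Filter.mem_of_superset (hNopen.mem_nhds hg₀N)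
    intro g hg
    have hA : m g ∈ V := interior_subset hg
    have hAGm : ∃ h ∈ G, ((h : GL (Fin n) ℝ) : Mat n) = m g := by
      refine ⟨(g₀ : GL (Fin n) ℝ)⁻¹ * (g : GL (Fin n) ℝ), G.mul_mem (G.inv_mem g₀.2) g.2, ?_⟩
      rw [Units.val_mul]
    obtain ⟨X, hXlie, hXA⟩ := hVP (m g) hA hAGm
    have hcommA : Commute T (m g) := by
      rw [← hXA]
      exact (hT X hXlie).exp_right
    have hgval : ((g : GL (Fin n) ℝ) : Mat n) = ((g₀ : GL (Fin n) ℝ) : Mat n) * m g := by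
      rw [hm]
      simp only [← Units.val_mul, ← mul_assoc, mul_inv_cancel, one_mul]
    show Commute T _
    rw [hgval]
    exact hg₀.mul_right hcommA
  have huniv : s = Set.univ :=
    IsClopen.eq_univ ⟨hclosedS, hopenS⟩ ⟨⟨1, G.one_mem⟩, Commute.one_right T⟩
  intro g hg
  have : (⟨g, hg⟩ : (G : Set (GL (Fin n) ℝ))) ∈ s := by rw [huniv]; trivial
  exact this

end Conn

section Act

theorem act_mul (A B : Mat n) (v : Euc n) : act (A * B) v = act A (act B v) := by
  simp only [act, Matrix.toEuclideanLin_apply]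
  apply (WithLp.equiv 2 _).injective
  simp [Matrix.mulVec_mulVec]

theorem act_one (v : Euc n) : act (1 : Mat n) v = v := by
  simp only [act, Matrix.toEuclideanLin_apply]
  apply (WithLp.equiv 2 _).injective
  simp

theorem act_smulM (c : ℝ) (A : Mat n) (v : Euc n) : act (c • A) v = c • act A v := by
  simp only [act, _root_.map_smul, LinearMap.smul_apply]

theorem act_smulV (c : ℝ) (A : Mat n) (v : Euc n) : act A (c • v) = c • act A v :=
  (Matrix.toEuclideanLin A).map_smul c v

theorem inner_act (A : Mat n) (v w : Euc n) :
    (inner ℝ (act A v) w : ℝ) = inner ℝ v (act Aᵀ w) := by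
  simp only [act, Matrix.toEuclideanLin_apply, PiLp.inner_apply, RCLike.inner_apply]
  simp only [Matrix.mulVec,
    dotProduct, Matrix.transpose_apply, starRingEnd_apply, star_trivial]
  simp only [Finset.mul_sum, Finset.sum_mul]
  rw [Finset.sum_comm]
  apply Finset.sum_congr rfl
  intro y _
  apply Finset.sum_congr rfl
  intro x _
  ring

/-- Schur-type lemma: a symmetric matrix commuting with the Lie algebra of a closed
connected irreducible group is scalar. -/
theorem schur (hclosed : IsClosed (G : Set (GL (Fin n) ℝ)))
    (hconn : IsConnected (G : Set (GL (Fin n) ℝ)))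
    (hirr : ∀ W : Submodule ℝ (Euc n),
      (∀ g ∈ G, ∀ w ∈ W, act ((g : GL (Fin n) ℝ) : Mat n) w ∈ W) → W = ⊥ ∨ W = ⊤)
    (hn : 0 < n) {T : Mat n} (hsym : Tᵀ = T)
    (hT : ∀ X ∈ lieAlgOf G, Commute T X) : ∃ μ : ℝ, T = μ • (1 : Mat n) := by
  have hcomm := commute_G_of_commute_lieAlg hclosed hconn hT
  have hherm : T.IsHermitian := by
    rw [Matrix.IsHermitian, Matrix.conjTranspose_eq_transpose_of_trivial, hsym]
  set i₀ : Fin n := ⟨0, hn⟩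
  set μ : ℝ := hherm.eigenvalues i₀ with hμ
  set v : Euc n := hherm.eigenvectorBasis i₀ with hv
  have hvact : act T v = μ • v := by
    have := hherm.mulVec_eigenvectorBasis i₀
    simp only [act, Matrix.toEuclideanLin_apply]
    apply (WithLp.equiv 2 _).injective
    simpa using this
  have hvne : v ≠ 0 := hherm.eigenvectorBasis.toBasis.ne_zero i₀
  set W : Submodule ℝ (Euc n) := LinearMap.ker
    (Matrix.toEuclideanLin T - μ • LinearMap.id) with hW
  have hmemW : ∀ w, w ∈ W ↔ act T w = μ • w := by
    intro w
    rw [hW, LinearMap.mem_ker, LinearMap.sub_apply, LinearMap.smul_apply, LinearMap.id_apply,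
      sub_eq_zero]
    exact Iff.rfl
  have hWinv : ∀ g ∈ G, ∀ w ∈ W, act ((g : GL (Fin n) ℝ) : Mat n) w ∈ W := by
    intro g hg w hw
    rw [hmemW] at hw ⊢
    rw [← act_mul, (hcomm g hg).eq, act_mul, hw, act_smulV]
  rcases hirr W hWinv with hbot | htop
  · exfalso
    apply hvne
    have : v ∈ W := (hmemW v).mpr hvact
    rw [hbot] at this
    simpa using this
  · refine ⟨μ, ?_⟩
    apply (Matrix.toEuclideanLin (𝕜 := ℝ) (m := Fin n) (n := Fin n)).injective
    apply LinearMap.ext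
    intro w
    have hwW : w ∈ W := by rw [htop]; trivial
    rw [hmemW] at hwW
    show act T w = Matrix.toEuclideanLin (μ • (1 : Mat n)) w
    rw [hwW]
    rw [show Matrix.toEuclideanLin (μ • (1 : Mat n)) w = act (μ • (1:Mat n)) w from rfl,
      act_smulM, act_one]

end Act

section Killing

/-- `M(n,ℝ)` with the Frobenius inner product, as a Euclidean space. -/
def matEquiv (n : ℕ) : Mat n ≃ₗ[ℝ] EuclideanSpace ℝ (Fin n × Fin n) :=
  (LinearEquiv.curry ℝ ℝ (Fin n) (Fin n)).symm.trans
    (WithLp.linearEquiv 2 ℝ ((Fin n × Fin n) → ℝ)).symm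

theorem matEquiv_apply (A : Mat n) (p : Fin n × Fin n) : matEquiv n A p = A p.1 p.2 := rfl

theorem inner_matEquiv (A B : Mat n) :
    (inner ℝ (matEquiv n A) (matEquiv n B) : ℝ) = Matrix.trace (A * Bᵀ) := by
  simp only [PiLp.inner_apply, RCLike.inner_apply, starRingEnd_apply, star_trivial,
    matEquiv_apply, Matrix.trace, Matrix.diag, Matrix.mul_apply, Matrix.transpose_apply]
  rw [← Finset.sum_product']
  apply Finset.sum_congr rfl
  intro p _
  ring

theorem inner_matEquiv_bracket (X A B : Mat n) :
    (inner ℝ (matEquiv n ⁅X, A⁆) (matEquiv n B) : ℝ)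
      = inner ℝ (matEquiv n A) (matEquiv n ⁅Xᵀ, B⁆) := by
  rw [inner_matEquiv, inner_matEquiv, Ring.lie_def, Ring.lie_def]
  rw [Matrix.transpose_sub, Matrix.transpose_mul, Matrix.transpose_mul,
    Matrix.transpose_transpose]
  rw [Matrix.sub_mul, Matrix.mul_sub, Matrix.trace_sub, Matrix.trace_sub]
  congr 1
  · rw [Matrix.mul_assoc, Matrix.trace_mul_comm X (A * Bᵀ), Matrix.mul_assoc]
  · rw [Matrix.mul_assoc]

theorem exists_central (hclosed : IsClosed (G : Set (GL (Fin n) ℝ)))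
    (hsa : IsSelfAdjointSubgroup G)
    (hnss : ∀ H : LieSubalgebra ℝ (Mat n), (H : Set (Mat n)) = lieAlgOf G →
      ¬ (killingForm ℝ H).Nondegenerate) :
    ∃ Z : Mat n, Z ∈ lieAlgOf G ∧ Z ≠ 0 ∧ ∀ Y ∈ lieAlgOf G, Commute Z Y := by
  classical
  set H := lieSubalg G hclosed with hH
  have hdeg := hnss H rfl
  rw [LinearMap.BilinForm.Nondegenerate, (LieModule.traceForm_isSymm ℝ H H).isRefl.nondegenerate_iff_separatingLeft,
    LinearMap.SeparatingLeft] at hdeg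
  push_neg at hdeg
  obtain ⟨x, hx0, hxne⟩ := hdeg
  set V : Submodule ℝ (Mat n) := H.toSubmodule with hV
  set e : Mat n ≃ₗ[ℝ] EuclideanSpace ℝ (Fin n × Fin n) := matEquiv n with he
  set V' : Submodule ℝ (EuclideanSpace ℝ (Fin n × Fin n)) := V.map (e : Mat n →ₗ[ℝ] _) with hV'
  set ε : V ≃ₗ[ℝ] V' := e.submoduleMap V with hε
  have hxT : (x : Mat n)ᵀ ∈ lieAlgOf G := transpose_mem_lieAlg hsa x.2
  set x' : H := ⟨(x : Mat n)ᵀ, hxT⟩ with hx'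
  set f : Module.End ℝ V' := ε.conj (LieAlgebra.ad ℝ H x) with hf
  set g : Module.End ℝ V' := ε.conj (LieAlgebra.ad ℝ H x') with hg
  have hval : ∀ (z : H) (u : V), ((ε.conj (LieAlgebra.ad ℝ H z)) (ε u) : EuclideanSpace ℝ _)
      = e ⁅(z : Mat n), (u : Mat n)⁆ := by
    intro z u
    rw [LinearEquiv.conj_apply, LinearMap.comp_apply, LinearMap.comp_apply]
    simp only [LinearEquiv.coe_coe, LinearEquiv.symm_apply_apply]
    rw [LinearEquiv.submoduleMap_apply]
    congr 1
  have hadj : g = LinearMap.adjoint f := by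
    rw [LinearMap.eq_adjoint_iff]
    intro u v
    obtain ⟨u₀, rfl⟩ := ε.surjective u
    obtain ⟨v₀, rfl⟩ := ε.surjective v
    rw [show (g (ε u₀)) = ε ⟨⁅(x' : Mat n), (u₀ : Mat n)⁆, H.lie_mem x'.2 u₀.2⟩ from ?_,
      show (f (ε v₀)) = ε ⟨⁅(x : Mat n), (v₀ : Mat n)⁆, H.lie_mem x.2 v₀.2⟩ from ?_]
    · rw [Submodule.coe_inner, Submodule.coe_inner]
      rw [LinearEquiv.submoduleMap_apply, LinearEquiv.submoduleMap_apply,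
        LinearEquiv.submoduleMap_apply, LinearEquiv.submoduleMap_apply]
      have := inner_matEquiv_bracket ((x : Mat n)ᵀ) (u₀ : Mat n) (v₀ : Mat n)
      rw [Matrix.transpose_transpose] at this
      exact this
    · apply Subtype.ext
      rw [hf, hval x v₀, LinearEquiv.submoduleMap_apply]
    · apply Subtype.ext
      rw [hg, hval x' u₀, LinearEquiv.submoduleMap_apply]
  -- the Killing form vanishing gives trace (f ∘ g) = 0
  have h1 : killingForm ℝ H x' x = 0 := by
    have h2 := hx0 x'
    have hsymm : killingForm ℝ H x' x = killingForm ℝ H x x' :=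
      LieModule.traceForm_comm ℝ H H x' x
    rw [hsymm, h2]
  have h2 : LinearMap.trace ℝ V' (g ∘ₗ f) = 0 := by
    rw [hg, hf]
    rw [show (ε.conj ((LieAlgebra.ad ℝ (↥H)) x')) ∘ₗ (ε.conj ((LieAlgebra.ad ℝ (↥H)) x))
        = ε.conj (((LieAlgebra.ad ℝ (↥H)) x') ∘ₗ ((LieAlgebra.ad ℝ (↥H)) x)) from
      (LinearEquiv.conj_comp ε _ _).symm]
    rw [LinearMap.trace_conj']
    exact (killingForm_apply_apply (R := ℝ) (L := ↥H) x' x).symm.trans h1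
  -- positivity of the trace of g ∘ g†
  set b := stdOrthonormalBasis ℝ V' with hb
  have htr : LinearMap.trace ℝ V' (g ∘ₗ f) = ∑ i, (inner ℝ (f (b i)) (f (b i)) : ℝ) := by
    rw [LinearMap.trace_eq_matrix_trace ℝ b.toBasis, Matrix.trace]
    apply Finset.sum_congr rfl
    intro i _
    rw [Matrix.diag_apply, LinearMap.toMatrix_apply]
    rw [b.coe_toBasis_repr_apply, b.repr_apply_apply]
    rw [b.coe_toBasis, LinearMap.comp_apply, hadj, LinearMap.adjoint_inner_right]
  have hfzero : f = 0 := by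
    have hsum : ∑ i, (inner ℝ (f (b i)) (f (b i)) : ℝ) = 0 := by rw [← htr, h2]
    have hzero : ∀ i, f (b i) = 0 := by
      intro i
      have hterm := (Finset.sum_eq_zero_iff_of_nonneg
        (fun i _ => real_inner_self_nonneg)).mp hsum i (Finset.mem_univ i)
      exact inner_self_eq_zero.mp hterm
    apply b.toBasis.ext
    intro i
    rw [b.coe_toBasis]
    simpa using hzero i
  refine ⟨(x : Mat n), x.2, fun hc => hxne (Subtype.ext hc), ?_⟩
  intro Y hY
  have h3 := hval x ⟨Y, hY⟩
  rw [show ε.conj (LieAlgebra.ad ℝ (↥H) x) = f from rfl, hfzero] at h3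
  have h4 : (⁅(x : Mat n), Y⁆ : Mat n) = 0 := by
    apply e.injective
    rw [← h3]
    simp
  rw [Ring.lie_def, sub_eq_zero] at h4
  exact h4

end Killing

section Branch1
attribute [local instance] Matrix.linftyOpNormedRing Matrix.linftyOpNormedAlgebra

theorem mexp_smul_one (r : ℝ) : mexp (r • (1 : Mat n)) = Real.exp r • (1 : Mat n) := by
  have h1 : r • (1 : Mat n) = algebraMap ℝ (Mat n) r := (Algebra.algebraMap_eq_smul_one r).symm
  have h2 : Real.exp r • (1 : Mat n) = algebraMap ℝ (Mat n) (Real.exp r) :=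
    (Algebra.algebraMap_eq_smul_one _).symm
  rw [h1, h2, mexp_def]
  have := NormedSpace.map_exp (algebraMap ℝ (Mat n)) (continuous_algebraMap ℝ (Mat n)) r
  rw [← Real.exp_eq_exp_ℝ] at this
  exact this.symm

end Branch1

theorem zero_mem_closure_orbit {c : ℝ} (hc1 : (c • (1 : Mat n)) ∈ lieAlgOf G) (hc : c < 0)
    (v : Euc n) : (0 : Euc n) ∈ closure (orbitOf G v) := by
  have horb : ∀ k : ℕ, (Real.exp ((k : ℝ) * c) • v) ∈ orbitOf G v := by
    intro k
    obtain ⟨g, hg, hval⟩ := hc1 (k : ℝ)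
    refine ⟨g, hg, ?_⟩
    rw [hval, smul_smul, mexp_smul_one, act_smulM, act_one]
  have hexp : Tendsto (fun k : ℕ => Real.exp ((k : ℝ) * c)) atTop (𝓝 0) := by
    apply Real.tendsto_exp_atBot.comp
    exact Tendsto.atTop_mul_const_of_neg hc tendsto_natCast_atTop_atTop
  have hlim : Tendsto (fun k : ℕ => Real.exp ((k : ℝ) * c) • v) atTop (𝓝 (0 : Euc n)) := by
    have := hexp.smul_const v
    rwa [zero_smul] at this
  exact mem_closure_of_tendsto hlim (Eventually.of_forall horb)

theorem act_injective {A : Mat n} (h : ∀ v : Euc n, act A v = 0) : A = 0 := by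
  apply (Matrix.toEuclideanLin (𝕜 := ℝ) (m := Fin n) (n := Fin n)).injective
  rw [map_zero]
  exact LinearMap.ext h

/-- The master lemma: the full statement, proved from all hypotheses. -/
theorem master (G : Subgroup (GL (Fin n) ℝ))
    (hclosed : IsClosed (G : Set (GL (Fin n) ℝ)))
    (hconn : IsConnected (G : Set (GL (Fin n) ℝ)))
    (hsa : IsSelfAdjointSubgroup G)
    (hirr : ∀ W : Submodule ℝ (Euc n),
      (∀ g ∈ G, ∀ w ∈ W, act ((g : GL (Fin n) ℝ) : Mat n) w ∈ W) → W = ⊥ ∨ W = ⊤)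
    (hnss : ∀ H : LieSubalgebra ℝ (Mat n), (H : Set (Mat n)) = lieAlgOf G →
      ¬ (killingForm ℝ H).Nondegenerate) :
    (∀ v : Euc n, (0 : Euc n) ∈ closure (orbitOf G v))
    ∨ (∃ J : Mat n, Jᵀ = -J ∧ J * J = -1 ∧
        {X : Mat n | X ∈ lieAlgOf G ∧ ∀ Y ∈ lieAlgOf G, ⁅X, Y⁆ = 0}
          = {X : Mat n | ∃ c : ℝ, X = c • J}) := by
  rcases Nat.eq_zero_or_pos n with hn0 | hn
  · -- n = 0 : trivial, with J = 0
    right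
    subst hn0
    refine ⟨0, by simp, Subsingleton.elim _ _, ?_⟩
    ext X
    simp only [Set.mem_setOf_eq]
    constructor
    · intro _
      exact ⟨0, Subsingleton.elim _ _⟩
    · intro _
      constructor
      · rw [Subsingleton.elim X (0 : Mat 0)]
        exact zero_mem_lieAlg
      · intro Y _
        exact Subsingleton.elim _ _
  · obtain ⟨Z, hZlie, hZne, hZcomm⟩ := exists_central hclosed hsa hnss
    by_cases hsplit : ∃ S : Mat n, S ∈ lieAlgOf G ∧ Sᵀ = S ∧ S ≠ 0 ∧
      ∀ Y ∈ lieAlgOf G, Commute S Y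
    · -- there is a nonzero symmetric central element: it is a scalar, giving contractions
      left
      obtain ⟨S, hSlie, hSsym, hSne, hScomm⟩ := hsplit
      obtain ⟨μ, hμ⟩ := schur hclosed hconn hirr hn hSsym hScomm
      have hμne : μ ≠ 0 := by
        intro h0
        rw [h0, zero_smul] at hμ
        exact hSne hμ
      intro v
      rcases lt_or_gt_of_ne hμne with hlt | hgt
      · exact zero_mem_closure_orbit (hμ ▸ hSlie) hlt v
      · have hneg : ((-μ) • (1 : Mat n)) ∈ lieAlgOf G := by
          have := neg_mem_lieAlg hSlie
          rwa [hμ, ← neg_smul] at this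
        exact zero_mem_closure_orbit hneg (by linarith) v
    · -- all central elements are skew-symmetric
      right
      push_neg at hsplit
      have hskew : ∀ W ∈ lieAlgOf G, (∀ Y ∈ lieAlgOf G, Commute W Y) → Wᵀ = -W := by
        intro W hW hWcomm
        set S : Mat n := (1/2 : ℝ) • (W + Wᵀ) with hS
        have hWT : Wᵀ ∈ lieAlgOf G := transpose_mem_lieAlg hsa hW
        have hSlie : S ∈ lieAlgOf G := smul_mem_lieAlg _ (add_mem_lieAlg hclosed hW hWT)
        have hSsym : Sᵀ = S := by
          rw [hS, Matrix.transpose_smul, Matrix.transpose_add, Matrix.transpose_transpose,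
            add_comm]
        have hScomm : ∀ Y ∈ lieAlgOf G, Commute S Y := by
          intro Y hY
          have h1 : Commute W Y := hWcomm Y hY
          have h2 : Commute Wᵀ Y := by
            have h3 := hWcomm Yᵀ (transpose_mem_lieAlg hsa hY)
            have h4 := congrArg Matrix.transpose h3.eq
            rw [Matrix.transpose_mul, Matrix.transpose_mul, Matrix.transpose_transpose] at h4
            exact h4.symm
          exact ((h1.add_left h2).smul_left _)
        have hS0 : S = 0 := by
          by_contra hSne
          obtain ⟨Y, hY, hnc⟩ := hsplit S hSlie hSsym hSne
          exact hnc (hScomm Y hY)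
        rw [hS, smul_eq_zero] at hS0
        rcases hS0 with h | h
        · norm_num at h
        · exact eq_neg_of_add_eq_zero_right h
      have hZskew : Zᵀ = -Z := hskew Z hZlie hZcomm
      have hZZsym : (Z * Z)ᵀ = Z * Z := by
        rw [Matrix.transpose_mul, hZskew, neg_mul_neg]
      have hZZcomm : ∀ Y ∈ lieAlgOf G, Commute (Z * Z) Y := fun Y hY =>
        (hZcomm Y hY).mul_left (hZcomm Y hY)
      obtain ⟨c, hc⟩ := schur hclosed hconn hirr hn hZZsym hZZcomm
      have hactneg : ∀ w : Euc n, act (-Z) w = - act Z w := by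
        intro w
        have := act_smulM (-1 : ℝ) Z w
        rwa [neg_one_smul, neg_one_smul] at this
      obtain ⟨v, hv⟩ : ∃ v : Euc n, act Z v ≠ 0 := by
        by_contra hno
        push_neg at hno
        exact hZne (act_injective hno)
      have hvne : v ≠ 0 := by
        intro h0
        apply hv
        rw [h0]
        exact map_zero (Matrix.toEuclideanLin Z)
      have hclt : c < 0 := by
        have hinner1 : (inner ℝ (act (Z * Z) v) v : ℝ)
            = - (inner ℝ (act Z v) (act Z v) : ℝ) := by
          rw [act_mul, inner_act, hZskew, hactneg, inner_neg_right]
        have hinner2 : (inner ℝ (act (Z * Z) v) v : ℝ) = c * (inner ℝ v v : ℝ) := by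
          rw [hc, act_smulM, act_one, real_inner_smul_left]
        have hp1 : (0:ℝ) < inner ℝ v v := by
          rw [real_inner_self_eq_norm_mul_norm]
          have := norm_pos_iff.mpr hvne
          positivity
        have hp2 : (0:ℝ) < inner ℝ (act Z v) (act Z v) := by
          rw [real_inner_self_eq_norm_mul_norm]
          have := norm_pos_iff.mpr hv
          positivity
        nlinarith [hinner1.symm.trans hinner2]
      have hcne : c ≠ 0 := ne_of_lt hclt
      set s : ℝ := (Real.sqrt (-c))⁻¹ with hs
      have hsqrtpos : 0 < Real.sqrt (-c) := Real.sqrt_pos.mpr (by linarith)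
      have hspos : 0 < s := inv_pos.mpr hsqrtpos
      have hsne : s ≠ 0 := ne_of_gt hspos
      have hss : s * s * c = -1 := by
        have h1 : Real.sqrt (-c) * Real.sqrt (-c) = -c :=
          Real.mul_self_sqrt (by linarith)
        rw [hs]
        field_simp
        nlinarith [h1]
      refine ⟨s • Z, ?_, ?_, ?_⟩
      · rw [Matrix.transpose_smul, hZskew, smul_neg]
      · rw [smul_mul_smul_comm, hc, smul_smul, hss, neg_smul, one_smul]
      · ext X
        simp only [Set.mem_setOf_eq]
        constructor
        · rintro ⟨hX, hXbr⟩
          have hXcomm : ∀ Y ∈ lieAlgOf G, Commute X Y := by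
            intro Y hY
            have h := hXbr Y hY
            rw [Ring.lie_def, sub_eq_zero] at h
            exact h
          have hXskew := hskew X hX hXcomm
          have hXZ : Commute X Z := hXcomm Z hZlie
          have hPsym : (X * Z)ᵀ = X * Z := by
            rw [Matrix.transpose_mul, hXskew, hZskew, neg_mul_neg, hXZ.eq]
          have hPcomm : ∀ Y ∈ lieAlgOf G, Commute (X * Z) Y := fun Y hY =>
            (hXcomm Y hY).mul_left (hZcomm Y hY)
          obtain ⟨lam, hlam⟩ := schur hclosed hconn hirr hn hPsym hPcomm
          have h5 : X * (Z * Z) = lam • Z := by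
            rw [← Matrix.mul_assoc, hlam, Matrix.smul_mul, Matrix.one_mul]
          rw [hc] at h5
          have h6 : c • X = lam • Z := by
            rwa [Matrix.mul_smul, Matrix.mul_one] at h5
          have h7 : X = (c⁻¹ * lam) • Z := by
            have h8 := congrArg (fun M : Mat n => c⁻¹ • M) h6
            simp only [smul_smul] at h8
            rwa [inv_mul_cancel₀ hcne, one_smul] at h8
          refine ⟨c⁻¹ * lam * s⁻¹, ?_⟩
          rw [h7, smul_smul, mul_assoc, inv_mul_cancel₀ hsne, mul_one]
        · rintro ⟨c', rfl⟩
          constructor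
          · rw [smul_smul]
            exact smul_mem_lieAlg _ hZlie
          · intro Y hY
            rw [smul_smul, smul_lie, Ring.lie_def, sub_eq_zero.mpr (hZcomm Y hY).eq, smul_zero]

end EJ

/-- Let G be a closed, connected, self-adjoint, noncompact subgroup of GL(n,ℝ)
acting irreducibly on ℝⁿ, whose Lie algebra 𝔊 is not semisimple. Then either
(1) 0 ∈ closure (G(v)) for every v ∈ ℝⁿ, or
(2) there is a skew-symmetric J with J² = -I such that the center of 𝔊 equals ℝ·J. -/
theorem stmt3 {n : ℕ} (G : Subgroup (GL (Fin n) ℝ))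
    (hclosed : IsClosed (G : Set (GL (Fin n) ℝ)))
    (hconn : IsConnected (G : Set (GL (Fin n) ℝ)))
    (hsa : IsSelfAdjointSubgroup G)
    (hnc : ¬ IsCompact (G : Set (GL (Fin n) ℝ)))
    (hirr : ∀ W : Submodule ℝ (Euc n),
      (∀ g ∈ G, ∀ w ∈ W, act ((g : GL (Fin n) ℝ) : Mat n) w ∈ W) → W = ⊥ ∨ W = ⊤)
    (hnss : ∀ H : LieSubalgebra ℝ (Mat n), (H : Set (Mat n)) = lieAlgOf G →
      ¬ (killingForm ℝ H).Nondegenerate) :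
    (∀ v : Euc n, (0 : Euc n) ∈ closure (orbitOf G v))
    ∨ (∃ J : Mat n, Jᵀ = -J ∧ J * J = -1 ∧
        {X : Mat n | X ∈ lieAlgOf G ∧ ∀ Y ∈ lieAlgOf G, ⁅X, Y⁆ = 0}
          = {X : Mat n | ∃ c : ℝ, X = c • J}) := by
  exact EJ.master G hclosed hconn hsa hirr hnss

end
end

section
/- Let G be a closed, connected, self-adjoint, noncompact subgroup of GL(n,ℝ) and let v ∈ ℝⁿ be nonzero. Then λ⁻(v) = λ⁻(k(v)) for every k ∈ K = G ∩ O(n,ℝ). -/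
open Matrix Filter Topology

noncomputable section

namespace Stmt9Aux

variable {n : ℕ}

lemma act_apply (A : Mat n) (v : Euc n) :
    act A v = (WithLp.equiv 2 (Fin n → ℝ)).symm (A *ᵥ (WithLp.equiv 2 (Fin n → ℝ)) v) :=
  Matrix.toEuclideanLin_apply A v

lemma act_mul (A B : Mat n) (v : Euc n) : act (A * B) v = act A (act B v) := by
  simp [act_apply, Matrix.mulVec_mulVec]

lemma act_one (v : Euc n) : act (1 : Mat n) v = v := by
  simp [act_apply]

lemma act_zero (A : Mat n) : act A (0 : Euc n) = 0 := by
  unfold act; exact map_zero _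

lemma act_smul (A : Mat n) (μ : ℝ) (v : Euc n) : act A (μ • v) = μ • act A v := by
  unfold act; exact map_smul _ μ v

lemma act_cancel (A : Mat n) (h1 : Aᵀ * A = 1) (v : Euc n) : act Aᵀ (act A v) = v := by
  rw [← act_mul, h1, act_one]

lemma act_cancel' (A : Mat n) (h2 : A * Aᵀ = 1) (v : Euc n) : act A (act Aᵀ v) = v := by
  rw [← act_mul, h2, act_one]

lemma inner_act (A : Mat n) (h : Aᵀ * A = 1) (x y : Euc n) :
    (inner ℝ (act A x) (act A y) : ℝ) = inner ℝ x y := by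
  have hx : ∀ u w : Euc n, (inner ℝ u w : ℝ) =
      dotProduct ((WithLp.equiv 2 (Fin n → ℝ)) u) ((WithLp.equiv 2 (Fin n → ℝ)) w) := by
    intro u w
    simp [PiLp.inner_apply, dotProduct, RCLike.inner_apply, mul_comm]
  rw [hx, hx]
  simp only [act_apply, Equiv.apply_symm_apply]
  rw [Matrix.dotProduct_mulVec, ← Matrix.vecMul_transpose, Matrix.vecMul_vecMul, h,
    Matrix.vecMul_one]

/-- The linear isometry equivalence of `Euc n` given by an orthogonal matrix. -/
def actIso (A : Mat n) (h1 : Aᵀ * A = 1) (h2 : A * Aᵀ = 1) : Euc n ≃ₗᵢ[ℝ] Euc n :=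
  LinearEquiv.isometryOfInner
    (LinearEquiv.ofLinear (Matrix.toEuclideanLin A) (Matrix.toEuclideanLin Aᵀ)
      (LinearMap.ext fun v => by
        show act A (act Aᵀ v) = v
        exact act_cancel' A h2 v)
      (LinearMap.ext fun v => by
        show act Aᵀ (act A v) = v
        exact act_cancel A h1 v))
    (fun x y => inner_act A h1 x y)

lemma actIso_apply (A : Mat n) (h1 : Aᵀ * A = 1) (h2 : A * Aᵀ = 1) (v : Euc n) :
    actIso A h1 h2 v = act A v := rfl

lemma actIso_symm_apply (A : Mat n) (h1 : Aᵀ * A = 1) (h2 : A * Aᵀ = 1) (v : Euc n) :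
    (actIso A h1 h2).symm v = act Aᵀ v := by
  apply (actIso A h1 h2).injective
  rw [LinearIsometryEquiv.apply_symm_apply, actIso_apply, act_cancel' A h2]

lemma eigenspace_conj (A : Mat n) (h1 : Aᵀ * A = 1) (h2 : A * Aᵀ = 1) (X : Mat n) (μ : ℝ) :
    Module.End.eigenspace (Matrix.toEuclideanLin (A * X * Aᵀ)) μ =
      (Module.End.eigenspace (Matrix.toEuclideanLin X) μ).map
        ((actIso A h1 h2).toLinearEquiv : Euc n →ₗ[ℝ] Euc n) := by
  ext x
  rw [Submodule.mem_map_equiv]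
  have hsymm : (actIso A h1 h2).toLinearEquiv.symm x = act Aᵀ x := actIso_symm_apply A h1 h2 x
  rw [Module.End.mem_eigenspace_iff, Module.End.mem_eigenspace_iff, hsymm]
  have hL : Matrix.toEuclideanLin (A * X * Aᵀ) x = act A (act X (act Aᵀ x)) := by
    show act (A * X * Aᵀ) x = _
    rw [act_mul, act_mul]
  rw [hL]
  constructor
  · intro h
    show act X (act Aᵀ x) = μ • act Aᵀ x
    have := congrArg (act Aᵀ) h
    rwa [act_cancel A h1, act_smul] at this
  · intro h
    replace h : act X (act Aᵀ x) = μ • act Aᵀ x := h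
    rw [h, act_smul, act_cancel' A h2]

lemma proj_ne_zero_congr {p q : Submodule ℝ (Euc n)} (h : p = q)
    [Submodule.HasOrthogonalProjection p] [Submodule.HasOrthogonalProjection q] (x : Euc n) :
    Submodule.orthogonalProjectionOnto p x ≠ 0 ↔ Submodule.orthogonalProjectionOnto q x ≠ 0 := by
  subst h; rfl

lemma hasComp_conj (A : Mat n) (h1 : Aᵀ * A = 1) (h2 : A * Aᵀ = 1) (X : Mat n) (v : Euc n)
    (μ : ℝ) : hasComp (A * X * Aᵀ) (act A v) μ ↔ hasComp X v μ := by
  unfold hasComp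
  have key : (↑(Submodule.orthogonalProjectionOnto
      ((Module.End.eigenspace (Matrix.toEuclideanLin X) μ).map
        ((actIso A h1 h2).toLinearEquiv : Euc n →ₗ[ℝ] Euc n)) (act A v)) : Euc n) =
      actIso A h1 h2
        (Submodule.orthogonalProjectionOnto (Module.End.eigenspace (Matrix.toEuclideanLin X) μ) v) := by
    rw [← Submodule.starProjection_apply, Submodule.starProjection_map_apply,
      Submodule.starProjection_apply]
    congr 2
    rw [actIso_symm_apply, act_cancel A h1]
  have main : Submodule.orthogonalProjectionOnto
      ((Module.End.eigenspace (Matrix.toEuclideanLin X) μ).map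
        ((actIso A h1 h2).toLinearEquiv : Euc n →ₗ[ℝ] Euc n)) (act A v) = 0 ↔
      Submodule.orthogonalProjectionOnto (Module.End.eigenspace (Matrix.toEuclideanLin X) μ) v = 0 := by
    constructor
    · intro h
      have hc : actIso A h1 h2
          ↑(Submodule.orthogonalProjectionOnto (Module.End.eigenspace (Matrix.toEuclideanLin X) μ) v) = 0 := by
        rw [← key, h, ZeroMemClass.coe_zero]
      have hz := (actIso A h1 h2).map_eq_zero_iff.mp hc
      exact ZeroMemClass.coe_eq_zero.mp hz
    · intro h
      apply ZeroMemClass.coe_eq_zero.mp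
      rw [key, h, ZeroMemClass.coe_zero, map_zero]
  exact (proj_ne_zero_congr (eigenspace_conj A h1 h2 X μ) (act A v)).trans (not_congr main)

lemma lambdaOf_conj (A : Mat n) (h1 : Aᵀ * A = 1) (h2 : A * Aᵀ = 1) (X : Mat n) (v : Euc n) :
    lambdaOf (A * X * Aᵀ) (act A v) = lambdaOf X v := by
  unfold lambdaOf
  congr 1
  ext μ
  exact hasComp_conj A h1 h2 X v μ

lemma trace_conj (A X Y : Mat n) :
    Matrix.trace (A * X * Aᵀ * Yᵀ) = Matrix.trace (X * (Aᵀ * Yᵀ * A)) := by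
  rw [show A * X * Aᵀ * Yᵀ = A * (X * (Aᵀ * Yᵀ)) by simp only [mul_assoc],
    Matrix.trace_mul_comm, mul_assoc]

lemma minner_conj (A X Y : Mat n) : minner (A * X * Aᵀ) Y = minner X (Aᵀ * Y * A) := by
  unfold minner
  rw [show (Aᵀ * Y * A)ᵀ = Aᵀ * Yᵀ * A by
    simp [Matrix.transpose_mul, Matrix.transpose_transpose, mul_assoc]]
  exact trace_conj A X Y

lemma conj_conj (A : Mat n) (h1 : Aᵀ * A = 1) (X : Mat n) : Aᵀ * (A * X * Aᵀ) * A = X := by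
  rw [show Aᵀ * (A * X * Aᵀ) * A = Aᵀ * A * X * (Aᵀ * A) by simp only [mul_assoc], h1]
  rw [one_mul, mul_one]

lemma mnorm_conj (A : Mat n) (h1 : Aᵀ * A = 1) (X : Mat n) : mnorm (A * X * Aᵀ) = mnorm X := by
  unfold mnorm
  rw [minner_conj, conj_conj A h1]

lemma lieAlg_conj {G : Subgroup (GL (Fin n) ℝ)} (k : GL (Fin n) ℝ) (hk : k ∈ G)
    (hkO : ((k : GL (Fin n) ℝ) : Mat n)ᵀ * ((k : GL (Fin n) ℝ) : Mat n) = 1)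
    {X : Mat n} (hX : X ∈ lieAlgOf G) :
    ((k : GL (Fin n) ℝ) : Mat n) * X * ((k : GL (Fin n) ℝ) : Mat n)ᵀ ∈ lieAlgOf G := by
  intro t
  obtain ⟨g, hg, hgX⟩ := hX t
  refine ⟨k * g * k⁻¹, mul_mem (mul_mem hk hg) (inv_mem hk), ?_⟩
  have hKinv : ((k : GL (Fin n) ℝ) : Mat n)ᵀ = ((k : GL (Fin n) ℝ) : Mat n)⁻¹ :=
    (Matrix.inv_eq_left_inv hkO).symm
  have hsm : t • (((k : GL (Fin n) ℝ) : Mat n) * X * ((k : GL (Fin n) ℝ) : Mat n)ᵀ)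
      = ((k : GL (Fin n) ℝ) : Mat n) * (t • X) * ((k : GL (Fin n) ℝ) : Mat n)ᵀ := by
    simp [Matrix.smul_mul, Matrix.mul_smul]
  unfold mexp
  rw [Units.val_mul, Units.val_mul, hgX, hsm, hKinv,
    Matrix.exp_conj _ _ k.isUnit, Matrix.coe_units_inv]
  rfl

lemma kSet_conj {G : Subgroup (GL (Fin n) ℝ)} (k : GL (Fin n) ℝ) (hk : k ∈ G)
    (hkO : ((k : GL (Fin n) ℝ) : Mat n)ᵀ * ((k : GL (Fin n) ℝ) : Mat n) = 1)
    {Y : Mat n} (hY : Y ∈ kSet G) :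
    ((k : GL (Fin n) ℝ) : Mat n) * Y * ((k : GL (Fin n) ℝ) : Mat n)ᵀ ∈ kSet G := by
  refine ⟨lieAlg_conj k hk hkO hY.1, ?_⟩
  simp [Matrix.transpose_mul, Matrix.transpose_transpose, hY.2, mul_assoc,
    Matrix.mul_neg, Matrix.neg_mul]

lemma stab_conj {G : Subgroup (GL (Fin n) ℝ)} (k : GL (Fin n) ℝ) (hk : k ∈ G)
    (hkO : ((k : GL (Fin n) ℝ) : Mat n)ᵀ * ((k : GL (Fin n) ℝ) : Mat n) = 1)
    (v : Euc n) {Y : Mat n} (hY : Y ∈ stabAlg G v) :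
    ((k : GL (Fin n) ℝ) : Mat n) * Y * ((k : GL (Fin n) ℝ) : Mat n)ᵀ ∈
      stabAlg G (act ((k : GL (Fin n) ℝ) : Mat n) v) := by
  refine ⟨lieAlg_conj k hk hkO hY.1, ?_⟩
  rw [act_mul, act_mul, act_cancel _ hkO, hY.2, act_zero]

lemma coe_inv_eq_transpose (k : GL (Fin n) ℝ)
    (hkO : ((k : GL (Fin n) ℝ) : Mat n)ᵀ * ((k : GL (Fin n) ℝ) : Mat n) = 1) :
    ((k⁻¹ : GL (Fin n) ℝ) : Mat n) = ((k : GL (Fin n) ℝ) : Mat n)ᵀ := by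
  rw [Matrix.coe_units_inv, Matrix.inv_eq_left_inv hkO]

lemma tildeP_conj {G : Subgroup (GL (Fin n) ℝ)} (k : GL (Fin n) ℝ) (hk : k ∈ G)
    (hkO : ((k : GL (Fin n) ℝ) : Mat n)ᵀ * ((k : GL (Fin n) ℝ) : Mat n) = 1)
    (v : Euc n) {X : Mat n} (hX : X ∈ tildeP G v) :
    ((k : GL (Fin n) ℝ) : Mat n) * X * ((k : GL (Fin n) ℝ) : Mat n)ᵀ ∈
      tildeP G (act ((k : GL (Fin n) ℝ) : Mat n) v) := by
  refine ⟨lieAlg_conj k hk hkO hX.1, ?_⟩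
  intro Y hY
  rw [minner_conj]
  have hinv := coe_inv_eq_transpose k hkO
  have hinvO : ((k⁻¹ : GL (Fin n) ℝ) : Mat n)ᵀ * ((k⁻¹ : GL (Fin n) ℝ) : Mat n) = 1 := by
    rw [hinv, Matrix.transpose_transpose]
    exact mul_eq_one_comm.mp hkO
  apply hX.2
  rcases hY with h | h
  · left
    have := kSet_conj k⁻¹ (inv_mem hk) hinvO h
    rwa [hinv, Matrix.transpose_transpose] at this
  · right
    have := stab_conj k⁻¹ (inv_mem hk) hinvO _ h
    rwa [hinv, Matrix.transpose_transpose, act_cancel _ hkO] at this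

lemma lamSet_subset (G : Subgroup (GL (Fin n) ℝ)) (v : Euc n) (k : GL (Fin n) ℝ) (hk : k ∈ G)
    (hkO : ((k : GL (Fin n) ℝ) : Mat n)ᵀ * ((k : GL (Fin n) ℝ) : Mat n) = 1) :
    {r : ℝ | ∃ X ∈ tildeP G v, mnorm X = 1 ∧ r = lambdaOf X v} ⊆
      {r : ℝ | ∃ X ∈ tildeP G (act ((k : GL (Fin n) ℝ) : Mat n) v), mnorm X = 1 ∧
        r = lambdaOf X (act ((k : GL (Fin n) ℝ) : Mat n) v)} := by
  rintro r ⟨X, hXP, hXn, rfl⟩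
  have h2 : ((k : GL (Fin n) ℝ) : Mat n) * ((k : GL (Fin n) ℝ) : Mat n)ᵀ = 1 :=
    mul_eq_one_comm.mp hkO
  exact ⟨((k : GL (Fin n) ℝ) : Mat n) * X * ((k : GL (Fin n) ℝ) : Mat n)ᵀ,
    tildeP_conj k hk hkO v hXP, by rw [mnorm_conj _ hkO]; exact hXn,
    (lambdaOf_conj _ hkO h2 X v).symm⟩

end Stmt9Aux

/-- Let G be a closed, connected, self-adjoint, noncompact subgroup of GL(n,ℝ)
and v ∈ ℝⁿ nonzero. Then λ⁻(v) = λ⁻(k(v)) for every k ∈ K = G ∩ O(n,ℝ). -/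
theorem stmt9 {n : ℕ} (G : Subgroup (GL (Fin n) ℝ))
    (hclosed : IsClosed (G : Set (GL (Fin n) ℝ)))
    (hconn : IsConnected (G : Set (GL (Fin n) ℝ)))
    (hsa : IsSelfAdjointSubgroup G)
    (hnc : ¬ IsCompact (G : Set (GL (Fin n) ℝ)))
    (v : Euc n) (hv : v ≠ 0)
    (k : GL (Fin n) ℝ) (hk : k ∈ G)
    (hkO : ((k : GL (Fin n) ℝ) : Mat n)ᵀ * ((k : GL (Fin n) ℝ) : Mat n) = 1) :
    lamMinus G v = lamMinus G (act ((k : GL (Fin n) ℝ) : Mat n) v) := by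
  classical
  open Stmt9Aux in
  have hinv := Stmt9Aux.coe_inv_eq_transpose k hkO
  have hinvO : ((k⁻¹ : GL (Fin n) ℝ) : Mat n)ᵀ * ((k⁻¹ : GL (Fin n) ℝ) : Mat n) = 1 := by
    rw [hinv, Matrix.transpose_transpose]
    exact mul_eq_one_comm.mp hkO
  have hsub1 := Stmt9Aux.lamSet_subset G v k hk hkO
  have hsub2 := Stmt9Aux.lamSet_subset G (act ((k : GL (Fin n) ℝ) : Mat n) v) k⁻¹
    (inv_mem hk) hinvO
  have hcv : act ((k⁻¹ : GL (Fin n) ℝ) : Mat n) (act ((k : GL (Fin n) ℝ) : Mat n) v) = v := by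
    rw [hinv, ← Stmt9Aux.act_mul, hkO, Stmt9Aux.act_one]
  rw [hcv] at hsub2
  unfold lamMinus
  congr 1
  exact Set.Subset.antisymm hsub1 hsub2

end
end

section
/- Let G be a closed, connected, self-adjoint, noncompact subgroup of GL(n,ℝ), and let v ∈ ℝⁿ be a nonzero minimal vector such that the orbit G(v) is unbounded. Then 0 < λ_X(v) ≤ 1 for every X ∈ 𝔓̃_v with |X| = 1. -/
open Matrix Filter Topology
set_option maxHeartbeats 1000000

noncomputable section

/-! ### Auxiliary lemmas for the proof -/

section AuxTrotter

open NormedSpace in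
lemma aux_exp_remainder_bound {A : Type*} [NormedRing A] [NormedAlgebra ℝ A] [CompleteSpace A]
    (x : A) : ‖exp x - 1 - x‖ ≤ ‖x‖^2 * Real.exp ‖x‖ := by
  have hs : Summable (fun n : ℕ => ((n.factorial : ℝ))⁻¹ • x ^ n) := expSeries_summable' (𝕂 := ℝ) x
  have h2 : exp x - 1 - x = ∑' n : ℕ, (((n+2).factorial : ℝ))⁻¹ • x ^ (n+2) := by
    have := Summable.sum_add_tsum_nat_add (f := fun n : ℕ => ((n.factorial : ℝ))⁻¹ • x ^ n) 2 hs
    rw [exp_eq_tsum ℝ]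
    beta_reduce
    rw [← this]
    simp [Finset.sum_range_succ]
    abel
  rw [h2]
  have hsn : Summable (fun n : ℕ => ‖(((n+2).factorial : ℝ))⁻¹ • x ^ (n+2)‖) := by
    have := (norm_expSeries_summable' (𝕂 := ℝ) x)
    exact ((summable_nat_add_iff 2).mpr this)
  have hsr : Summable (fun n : ℕ => ‖x‖^2 * (‖x‖^n / n.factorial)) :=
    (Real.summable_pow_div_factorial ‖x‖).mul_left _
  calc ‖∑' n : ℕ, (((n+2).factorial : ℝ))⁻¹ • x ^ (n+2)‖
      ≤ ∑' n : ℕ, ‖(((n+2).factorial : ℝ))⁻¹ • x ^ (n+2)‖ := norm_tsum_le_tsum_norm hsn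
    _ ≤ ∑' n : ℕ, ‖x‖^2 * (‖x‖^n / n.factorial) := by
        refine Summable.tsum_le_tsum (fun n => ?_) hsn hsr
        rw [norm_smul]
        have h1 : ‖x ^ (n+2)‖ ≤ ‖x‖^(n+2) := norm_pow_le' x (by omega)
        have h2 : ‖(((n+2).factorial : ℝ))⁻¹‖ = (((n+2).factorial : ℝ))⁻¹ := by
          rw [Real.norm_eq_abs, abs_of_nonneg]; positivity
        rw [h2]
        have h3 : (((n+2).factorial : ℝ))⁻¹ ≤ ((n.factorial : ℝ))⁻¹ := by
          apply inv_anti₀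
          · positivity
          · exact_mod_cast Nat.factorial_le (by omega)
        calc (((n+2).factorial : ℝ))⁻¹ * ‖x ^ (n+2)‖
            ≤ ((n.factorial : ℝ))⁻¹ * ‖x‖^(n+2) :=
              mul_le_mul h3 h1 (norm_nonneg _) (by positivity)
          _ = ‖x‖^2 * (‖x‖^n / n.factorial) := by ring
    _ = ‖x‖^2 * ∑' n : ℕ, (‖x‖^n / n.factorial) := by rw [tsum_mul_left]
    _ = ‖x‖^2 * Real.exp ‖x‖ := by
        congr 1
        rw [Real.exp_eq_exp_ℝ, exp_eq_tsum_div]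

open NormedSpace in
lemma aux_norm_exp_le {A : Type*} [NormedRing A] [NormedAlgebra ℝ A] [NormOneClass A]
    (x : A) : ‖exp x‖ ≤ Real.exp ‖x‖ := by
  rw [exp_eq_tsum ℝ]
  refine (norm_tsum_le_tsum_norm (norm_expSeries_summable' (𝕂 := ℝ) x)).trans ?_
  rw [Real.exp_eq_exp_ℝ, exp_eq_tsum_div]
  refine Summable.tsum_le_tsum (fun n => ?_) (norm_expSeries_summable' (𝕂 := ℝ) x)
    (Real.summable_pow_div_factorial ‖x‖)
  rw [norm_smul, Real.norm_eq_abs, abs_of_nonneg (by positivity)]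
  rw [div_eq_inv_mul]
  exact mul_le_mul_of_nonneg_left (norm_pow_le x n) (by positivity)

lemma aux_pow_sub_pow_norm_le {A : Type*} [NormedRing A] (c d : A) {M : ℝ}
    (hc : ‖c‖ ≤ M) (hd : ‖d‖ ≤ M) :
    ∀ k : ℕ, ‖c ^ (k+1) - d ^ (k+1)‖ ≤ (k+1) * M ^ k * ‖c - d‖ := by
  have hM : 0 ≤ M := le_trans (norm_nonneg _) hc
  intro k
  induction k with
  | zero => simpa using le_refl ‖c - d‖
  | succ k ih =>
    have h1 : c ^ (k+1+1) - d ^ (k+1+1) = (c - d) * d ^ (k+1) + c * (c ^ (k+1) - d ^ (k+1)) := by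
      rw [sub_mul, mul_sub, ← pow_succ', ← pow_succ']
      abel
    rw [h1]
    have h2 : ‖(c - d) * d ^ (k+1)‖ ≤ ‖c - d‖ * M ^ (k+1) :=
      (norm_mul_le _ _).trans (by
        refine mul_le_mul_of_nonneg_left ?_ (norm_nonneg _)
        exact (norm_pow_le' d (by omega)).trans (pow_le_pow_left₀ (norm_nonneg _) hd _))
    have h3 : ‖c * (c ^ (k+1) - d ^ (k+1))‖ ≤ M * ((k+1) * M ^ k * ‖c - d‖) :=
      (norm_mul_le _ _).trans (mul_le_mul hc ih (norm_nonneg _) hM)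
    calc ‖(c - d) * d ^ (k+1) + c * (c ^ (k+1) - d ^ (k+1))‖
        ≤ ‖(c - d) * d ^ (k+1)‖ + ‖c * (c ^ (k+1) - d ^ (k+1))‖ := norm_add_le _ _
      _ ≤ ‖c - d‖ * M ^ (k+1) + M * ((k+1) * M ^ k * ‖c - d‖) := add_le_add h2 h3
      _ = ((k+1 : ℕ) + 1 : ℝ) * M ^ (k+1) * ‖c - d‖ := by push_cast; ring

open NormedSpace in
lemma aux_key_est {A : Type*} [NormedRing A] [NormedAlgebra ℝ A] [CompleteSpace A]
    (a b : A) (h : ‖a‖ + ‖b‖ ≤ 1) :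
    ‖exp a * exp b - exp (a + b)‖ ≤ 25 * (‖a‖ + ‖b‖)^2 := by
  set s := ‖a‖ + ‖b‖ with hs
  have hs0 : 0 ≤ s := by positivity
  have ha : ‖a‖ ≤ s := le_add_of_nonneg_right (norm_nonneg b)
  have hb : ‖b‖ ≤ s := le_add_of_nonneg_left (norm_nonneg a)
  have hab : ‖a + b‖ ≤ s := norm_add_le a b
  have he3 : Real.exp s ≤ 3 := by
    calc Real.exp s ≤ Real.exp 1 := Real.exp_le_exp.mpr h
      _ ≤ 3 := by nlinarith [Real.exp_one_lt_d9]
  set Ea := exp a - 1 - a with hEa_def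
  set Eb := exp b - 1 - b with hEb_def
  set Eab := exp (a + b) - 1 - (a + b) with hEab_def
  have bnd : ∀ x : A, ‖x‖ ≤ s → ‖exp x - 1 - x‖ ≤ 3 * s^2 := by
    intro x hx
    calc ‖exp x - 1 - x‖ ≤ ‖x‖^2 * Real.exp ‖x‖ := aux_exp_remainder_bound x
      _ ≤ s^2 * 3 := by
          apply mul_le_mul (by nlinarith [norm_nonneg x]) ?_ (Real.exp_nonneg _) (by positivity)
          exact le_trans (Real.exp_le_exp.mpr hx) he3
      _ = 3 * s^2 := by ring
  have hEa1 : ‖Ea‖ ≤ 3 * s^2 := bnd a ha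
  have hEb1 : ‖Eb‖ ≤ 3 * s^2 := bnd b hb
  have hEab1 : ‖Eab‖ ≤ 3 * s^2 := bnd (a+b) hab
  have hexpa : exp a = 1 + a + Ea := by rw [hEa_def]; abel
  have hexpb : exp b = 1 + b + Eb := by rw [hEb_def]; abel
  have hexpab : exp (a + b) = 1 + (a + b) + Eab := by rw [hEab_def]; abel
  have hiden : exp a * exp b - exp (a + b)
      = a * b + (Eb + a * Eb) + (Ea + Ea * b + Ea * Eb) - Eab := by
    rw [hexpa, hexpb, hexpab]; noncomm_ring
  rw [hiden]
  have n1 : ‖a * b‖ ≤ s^2 := by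
    calc ‖a * b‖ ≤ ‖a‖ * ‖b‖ := norm_mul_le _ _
      _ ≤ s * s := mul_le_mul ha hb (norm_nonneg _) hs0
      _ = s^2 := (sq s).symm
  have n2 : ‖Eb + a * Eb‖ ≤ 6 * s^2 := by
    calc ‖Eb + a * Eb‖ ≤ ‖Eb‖ + ‖a‖ * ‖Eb‖ :=
          (norm_add_le _ _).trans (add_le_add_right (norm_mul_le _ _) _)
      _ ≤ 3 * s^2 + 1 * (3 * s^2) :=
          add_le_add hEb1 (mul_le_mul (ha.trans h) hEb1 (norm_nonneg _) zero_le_one)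
      _ = 6 * s^2 := by ring
  have n3 : ‖Ea + Ea * b + Ea * Eb‖ ≤ 15 * s^2 := by
    have h1 : ‖Ea * b‖ ≤ 3 * s^2 * 1 :=
      (norm_mul_le _ _).trans (mul_le_mul hEa1 (hb.trans h) (norm_nonneg _) (by positivity))
    have h2 : ‖Ea * Eb‖ ≤ 3 * s^2 * (3 * s^2) :=
      (norm_mul_le _ _).trans (mul_le_mul hEa1 hEb1 (norm_nonneg _) (by positivity))
    have h4 : s^2 ≤ 1 := by nlinarith
    calc ‖Ea + Ea * b + Ea * Eb‖ ≤ ‖Ea‖ + ‖Ea * b‖ + ‖Ea * Eb‖ :=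
          (norm_add_le _ _).trans (add_le_add_left (norm_add_le _ _) _)
      _ ≤ 3 * s^2 + 3 * s^2 * 1 + 3 * s^2 * (3 * s^2) :=
          add_le_add (add_le_add hEa1 h1) h2
      _ ≤ 15 * s^2 := by nlinarith
  calc ‖a * b + (Eb + a * Eb) + (Ea + Ea * b + Ea * Eb) - Eab‖
      ≤ ‖a * b + (Eb + a * Eb) + (Ea + Ea * b + Ea * Eb)‖ + ‖Eab‖ := norm_sub_le _ _
    _ ≤ (‖a * b‖ + ‖Eb + a * Eb‖ + ‖Ea + Ea * b + Ea * Eb‖) + ‖Eab‖ := by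
        refine add_le_add_left ((norm_add_le _ _).trans (add_le_add_left (norm_add_le _ _) _)) _
    _ ≤ (s^2 + 6 * s^2 + 15 * s^2) + 3 * s^2 :=
        add_le_add (add_le_add (add_le_add n1 n2) n3) hEab1
    _ = 25 * s^2 := by ring

open NormedSpace in
lemma aux_trotter_general {A : Type*} [NormedRing A] [NormedAlgebra ℝ A] [CompleteSpace A]
    [NormOneClass A] (P Q : A) :
    Filter.Tendsto (fun k : ℕ => (exp ((k:ℝ)⁻¹ • P) * exp ((k:ℝ)⁻¹ • Q)) ^ k) Filter.atTop
      (𝓝 (exp (P + Q))) := by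
  set α := ‖P‖ + ‖Q‖ with hα
  have hα0 : 0 ≤ α := by positivity
  rw [tendsto_iff_norm_sub_tendsto_zero]
  apply squeeze_zero' (Filter.Eventually.of_forall fun _ => norm_nonneg _) ?_
    (tendsto_const_div_atTop_nhds_zero_nat (25 * α^2 * Real.exp α))
  filter_upwards [Filter.eventually_ge_atTop (max 1 ⌈α⌉₊)] with k hk
  have hk1 : 1 ≤ k := le_trans (le_max_left _ _) hk
  have hkα : α ≤ (k : ℝ) := by
    have := le_trans (le_max_right 1 ⌈α⌉₊) hk
    exact_mod_cast Nat.ceil_le.mp this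
  have hkpos : (0:ℝ) < k := by exact_mod_cast hk1
  have hkne : (k:ℝ) ≠ 0 := ne_of_gt hkpos
  set a := (k:ℝ)⁻¹ • P with hadef
  set b := (k:ℝ)⁻¹ • Q with hbdef
  have hna : ‖a‖ = ‖P‖ / k := by
    rw [hadef, norm_smul, norm_inv, Real.norm_natCast, div_eq_inv_mul]
  have hnb : ‖b‖ = ‖Q‖ / k := by
    rw [hbdef, norm_smul, norm_inv, Real.norm_natCast, div_eq_inv_mul]
  have hs : ‖a‖ + ‖b‖ = α / k := by rw [hna, hnb, hα]; ring
  have hs1 : ‖a‖ + ‖b‖ ≤ 1 := by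
    rw [hs]; exact div_le_one_of_le₀ hkα (le_of_lt hkpos)
  have hD : exp (P + Q) = (exp (a + b)) ^ k := by
    letI : NormedAlgebra ℚ A := NormedAlgebra.restrictScalars ℚ ℝ A
    rw [← NormedSpace.exp_nsmul]
    congr 1
    rw [hadef, hbdef, ← smul_add, ← Nat.cast_smul_eq_nsmul ℝ k, smul_smul,
      mul_inv_cancel₀ hkne, one_smul]
  set C := exp a * exp b with hC
  set D := exp (a + b) with hDdef
  set M : ℝ := Real.exp (α / k) with hM
  have hM1 : 1 ≤ M := Real.one_le_exp (by positivity)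
  have hCM : ‖C‖ ≤ M := by
    calc ‖C‖ ≤ ‖exp a‖ * ‖exp b‖ := norm_mul_le _ _
      _ ≤ Real.exp ‖a‖ * Real.exp ‖b‖ :=
          mul_le_mul (aux_norm_exp_le a) (aux_norm_exp_le b) (norm_nonneg _) (Real.exp_nonneg _)
      _ = Real.exp (‖a‖ + ‖b‖) := (Real.exp_add _ _).symm
      _ = M := by rw [hs, hM]
  have hDM : ‖D‖ ≤ M := by
    calc ‖D‖ ≤ Real.exp ‖a + b‖ := aux_norm_exp_le _
      _ ≤ M := Real.exp_le_exp.mpr (le_trans (norm_add_le a b) (le_of_eq hs))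
  have hCD : ‖C - D‖ ≤ 25 * (α / k)^2 := by
    have := aux_key_est a b hs1
    rwa [hs] at this
  obtain ⟨m, rfl⟩ : ∃ m, k = m + 1 := ⟨k - 1, by omega⟩
  have hMm : M ^ m ≤ Real.exp α := by
    calc M ^ m ≤ M ^ (m+1) := pow_le_pow_right₀ hM1 (by omega)
      _ = Real.exp ((m+1 : ℕ) * (α / (m+1 : ℕ))) := by rw [hM, Real.exp_nat_mul]
      _ = Real.exp α := by rw [mul_div_cancel₀ _ hkne]
  calc ‖C ^ (m+1) - exp (P + Q)‖ = ‖C ^ (m+1) - D ^ (m+1)‖ := by rw [hD]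
    _ ≤ ((m:ℝ)+1) * M ^ m * ‖C - D‖ := aux_pow_sub_pow_norm_le C D hCM hDM m
    _ ≤ ((m:ℝ)+1) * Real.exp α * (25 * (α / (m+1:ℕ))^2) := by
        refine mul_le_mul (mul_le_mul_of_nonneg_left hMm (by positivity)) hCD (norm_nonneg _) ?_
        positivity
    _ = 25 * α^2 * Real.exp α / ((m:ℝ)+1) := by
        push_cast
        field_simp
    _ = 25 * α^2 * Real.exp α / ((m+1 : ℕ) : ℝ) := by push_cast; ring

end AuxTrotter

lemma aux_matrix_trotter {n : ℕ} [Nonempty (Fin n)] (P Q : Mat n) :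
    Filter.Tendsto (fun k : ℕ => (mexp ((k:ℝ)⁻¹ • P) * mexp ((k:ℝ)⁻¹ • Q)) ^ k) Filter.atTop
      (𝓝 (mexp (P + Q))) := by
  letI : SeminormedRing (Mat n) := Matrix.linftyOpSemiNormedRing
  letI : NormedRing (Mat n) := Matrix.linftyOpNormedRing
  letI : NormedAlgebra ℝ (Mat n) := Matrix.linftyOpNormedAlgebra
  letI : NormOneClass (Mat n) := Matrix.linfty_opNormOneClass
  exact aux_trotter_general P Q

lemma aux_mexp_mul_mexp_neg {n : ℕ} (M : Mat n) : mexp M * mexp (-M) = 1 := by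
  rw [mexp, mexp, ← Matrix.exp_add_of_commute M (-M) (Commute.neg_right (Commute.refl M))]
  simp [NormedSpace.exp_zero]

lemma aux_val_inv_of_val_mexp {n : ℕ} (g : GL (Fin n) ℝ) (M : Mat n)
    (h : (g : Mat n) = mexp M) : ((g⁻¹ : GL (Fin n) ℝ) : Mat n) = mexp (-M) := by
  have h1 : (g : Mat n) * mexp (-M) = 1 := by rw [h]; exact aux_mexp_mul_mexp_neg M
  calc ((g⁻¹ : GL (Fin n) ℝ) : Mat n)
      = ((g⁻¹ : GL (Fin n) ℝ) : Mat n) * ((g : Mat n) * mexp (-M)) := by rw [h1, mul_one]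
    _ = (((g⁻¹ * g : GL (Fin n) ℝ)) : Mat n) * mexp (-M) := by rw [Units.val_mul, mul_assoc]
    _ = mexp (-M) := by rw [inv_mul_cancel]; simp

lemma aux_tendsto_GL {n : ℕ} (u : ℕ → GL (Fin n) ℝ) (L : GL (Fin n) ℝ)
    (h1 : Filter.Tendsto (fun k => ((u k : Mat n))) Filter.atTop (𝓝 (L : Mat n)))
    (h2 : Filter.Tendsto (fun k => (((u k)⁻¹ : GL (Fin n) ℝ) : Mat n)) Filter.atTop
      (𝓝 ((L⁻¹ : GL (Fin n) ℝ) : Mat n))) :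
    Filter.Tendsto u Filter.atTop (𝓝 L) := by
  rw [(Units.isInducing_embedProduct (M := Mat n)).tendsto_nhds_iff]
  refine Filter.Tendsto.prodMk_nhds h1 ?_
  exact (MulOpposite.continuous_op.tendsto _).comp h2

lemma aux_lieAlg_add {n : ℕ} [Nonempty (Fin n)] {G : Subgroup (GL (Fin n) ℝ)}
    (hclosed : IsClosed (G : Set (GL (Fin n) ℝ)))
    {X Y : Mat n} (hX : X ∈ lieAlgOf G) (hY : Y ∈ lieAlgOf G) : X + Y ∈ lieAlgOf G := by
  intro t
  choose gX hgXmem hgXval using hX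
  choose gY hgYmem hgYval using hY
  set u : ℕ → GL (Fin n) ℝ := fun k => (gX (t / k) * gY (t / k)) ^ k with hu
  have humem : ∀ k, u k ∈ G := fun k => pow_mem (mul_mem (hgXmem _) (hgYmem _)) k
  set L : GL (Fin n) ℝ :=
    ⟨mexp (t • X + t • Y), mexp (-(t • X + t • Y)), aux_mexp_mul_mexp_neg _, by
      have := aux_mexp_mul_mexp_neg (-(t • X + t • Y)); rwa [neg_neg] at this⟩ with hL
  have hval : ∀ k : ℕ, ((u k : Mat n))
      = (mexp ((k:ℝ)⁻¹ • (t • X)) * mexp ((k:ℝ)⁻¹ • (t • Y))) ^ k := by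
    intro k
    rw [hu]
    rw [Units.val_pow_eq_pow_val, Units.val_mul, hgXval, hgYval]
    congr 2 <;> rw [smul_smul] <;> congr 1 <;> rw [div_eq_inv_mul]
  have hvalinv : ∀ k : ℕ, (((u k)⁻¹ : GL (Fin n) ℝ) : Mat n)
      = (mexp ((k:ℝ)⁻¹ • (t • (-Y))) * mexp ((k:ℝ)⁻¹ • (t • (-X)))) ^ k := by
    intro k
    rw [hu, ← inv_pow, _root_.mul_inv_rev, Units.val_pow_eq_pow_val, Units.val_mul,
      aux_val_inv_of_val_mexp _ _ (hgXval (t / k)), aux_val_inv_of_val_mexp _ _ (hgYval (t / k))]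
    congr 2 <;> simp [smul_neg, smul_smul, div_eq_inv_mul]
  have hlim1 : Filter.Tendsto (fun k => ((u k : Mat n))) Filter.atTop (𝓝 (L : Mat n)) := by
    have h := aux_matrix_trotter (t • X) (t • Y)
    simp only [hval]
    exact h
  have hlim2 : Filter.Tendsto (fun k => (((u k)⁻¹ : GL (Fin n) ℝ) : Mat n)) Filter.atTop
      (𝓝 ((L⁻¹ : GL (Fin n) ℝ) : Mat n)) := by
    have h := aux_matrix_trotter (t • (-Y)) (t • (-X))
    simp only [hvalinv]
    have hLinv : ((L⁻¹ : GL (Fin n) ℝ) : Mat n) = mexp (t • (-Y) + t • (-X)) := by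
      rw [aux_val_inv_of_val_mexp L (t • X + t • Y) rfl]
      congr 1
      rw [smul_neg, smul_neg, neg_add]
      abel
    rw [hLinv]
    exact h
  have hmem : L ∈ G :=
    hclosed.mem_of_tendsto (aux_tendsto_GL u L hlim1 hlim2) (Filter.Eventually.of_forall humem)
  refine ⟨L, hmem, ?_⟩
  show (L : Mat n) = mexp (t • (X + Y))
  rw [hL, smul_add]

lemma aux_lieAlg_neg {n : ℕ} {G : Subgroup (GL (Fin n) ℝ)} {X : Mat n}
    (hX : X ∈ lieAlgOf G) : -X ∈ lieAlgOf G := by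
  intro t
  obtain ⟨g, hg, hgval⟩ := hX (-t)
  exact ⟨g, hg, by rw [hgval]; congr 1; rw [smul_neg, neg_smul]⟩

lemma aux_lieAlg_transpose {n : ℕ} {G : Subgroup (GL (Fin n) ℝ)}
    (hsa : IsSelfAdjointSubgroup G) {X : Mat n} (hX : X ∈ lieAlgOf G) : Xᵀ ∈ lieAlgOf G := by
  intro t
  obtain ⟨g, hg, hgval⟩ := hX t
  obtain ⟨h, hh, hhval⟩ := hsa g hg
  refine ⟨h, hh, ?_⟩
  rw [hhval, hgval, mexp, mexp, ← Matrix.exp_transpose, Matrix.transpose_smul]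

lemma aux_minner_self_eq_sum {n : ℕ} (X : Mat n) :
    minner X X = ∑ i, ∑ j, (X i j)^2 := by
  simp [minner, Matrix.trace, Matrix.diag, Matrix.mul_apply, Matrix.transpose_apply, sq]

lemma aux_symm_of_orth {n : ℕ} {X : Mat n} (h : minner X (X + -Xᵀ) = 0) : Xᵀ = X := by
  set S : Mat n := X + -Xᵀ with hS
  have hSS : minner S S = 2 * minner X (X + -Xᵀ) := by
    simp only [minner, hS]
    have e1 : Matrix.trace (Xᵀ * Xᵀ) = Matrix.trace (X * X) := by
      rw [← Matrix.transpose_mul, Matrix.trace_transpose]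
    have e2 : Matrix.trace (Xᵀ * X) = Matrix.trace (X * Xᵀ) := Matrix.trace_mul_comm _ _
    simp only [Matrix.transpose_add, Matrix.transpose_neg, Matrix.transpose_transpose,
      Matrix.add_mul, Matrix.mul_add, Matrix.neg_mul, Matrix.mul_neg, neg_neg,
      Matrix.trace_add, Matrix.trace_neg]
    rw [e1, e2]; ring
  rw [h, mul_zero] at hSS
  have hzero : ∀ i j, S i j = 0 := by
    have hsum : ∑ i, ∑ j, (S i j)^2 = 0 := by rw [← aux_minner_self_eq_sum, hSS]
    intro i j
    have h1 : ∀ i ∈ (Finset.univ : Finset (Fin n)), (0:ℝ) ≤ ∑ j, (S i j)^2 := by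
      intro i _; positivity
    have h2 : ∑ j, (S i j)^2 = 0 :=
      (Finset.sum_eq_zero_iff_of_nonneg h1).mp hsum i (Finset.mem_univ i)
    have h3 : ∀ j ∈ (Finset.univ : Finset (Fin n)), (0:ℝ) ≤ (S i j)^2 := by
      intro j _; positivity
    have h4 := (Finset.sum_eq_zero_iff_of_nonneg h3).mp h2 j (Finset.mem_univ j)
    exact pow_eq_zero_iff (n := 2) (by omega) |>.mp h4
  have hS0 : X + -Xᵀ = 0 := by
    ext i j
    exact hzero i j
  have h5 : X = Xᵀ := add_neg_eq_zero.mp hS0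
  exact h5.symm

lemma aux_exp_clm_eigen {E : Type*} [NormedAddCommGroup E] [NormedSpace ℝ E] [CompleteSpace E]
    (T : E →L[ℝ] E) (w : E) (μ : ℝ) (h : T w = μ • w) :
    NormedSpace.exp T w = Real.exp μ • w := by
  have hpow : ∀ m : ℕ, (T ^ m) w = μ ^ m • w := by
    intro m; induction m with
    | zero => simp
    | succ m ih =>
      rw [pow_succ, ContinuousLinearMap.mul_apply, h, _root_.map_smul, ih, smul_smul,
        pow_succ, mul_comm]
  have hsum := NormedSpace.expSeries_summable' (𝕂 := ℝ) T
  have happ : (NormedSpace.exp T) w = ∑' m : ℕ, (((m.factorial : ℝ))⁻¹ • T ^ m) w := by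
    rw [NormedSpace.exp_eq_tsum ℝ]
    beta_reduce
    exact ((ContinuousLinearMap.apply ℝ E w).map_tsum hsum)
  rw [happ]
  have hterm : ∀ m : ℕ, (((m.factorial : ℝ))⁻¹ • T ^ m) w = (μ ^ m / m.factorial) • w := by
    intro m
    rw [ContinuousLinearMap.smul_apply, hpow, smul_smul, div_eq_inv_mul]
  simp only [hterm]
  rw [Summable.tsum_smul_const (Real.summable_pow_div_factorial μ)]
  congr 1
  rw [Real.exp_eq_exp_ℝ, NormedSpace.exp_eq_tsum_div]

lemma aux_toEuclideanCLM_continuous {n : ℕ} :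
    Continuous (fun X : Mat n => Matrix.toEuclideanCLM (𝕜 := ℝ) X) := by
  let f : Mat n →ₗ[ℝ] (Euc n →L[ℝ] Euc n) :=
    { toFun := fun X => Matrix.toEuclideanCLM (𝕜 := ℝ) X,
      map_add' := fun a b => map_add _ a b,
      map_smul' := fun c a => map_smul _ c a }
  exact f.continuous_of_finiteDimensional

lemma aux_act_mexp_eigen {n : ℕ} (X : Mat n) (w : Euc n) (μ : ℝ)
    (hw : Matrix.toEuclideanLin X w = μ • w) :
    act (mexp X) w = Real.exp μ • w := by
  letI : SeminormedRing (Mat n) := Matrix.linftyOpSemiNormedRing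
  letI : NormedRing (Mat n) := Matrix.linftyOpNormedRing
  letI : NormedAlgebra ℝ (Mat n) := Matrix.linftyOpNormedAlgebra
  letI : NormedAlgebra ℚ (Mat n) := NormedAlgebra.restrictScalars ℚ ℝ (Mat n)
  have hmap : Matrix.toEuclideanCLM (𝕜 := ℝ) (mexp X)
      = NormedSpace.exp (Matrix.toEuclideanCLM (𝕜 := ℝ) X) :=
    NormedSpace.map_exp (Matrix.toEuclideanCLM (𝕜 := ℝ) (n := Fin n))
      aux_toEuclideanCLM_continuous X
  have hact : act (mexp X) w = Matrix.toEuclideanCLM (𝕜 := ℝ) (mexp X) w := by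
    rw [act, ← Matrix.coe_toEuclideanCLM_eq_toEuclideanLin]; rfl
  rw [hact, hmap]
  apply aux_exp_clm_eigen
  have h2 : Matrix.toEuclideanCLM (𝕜 := ℝ) X w = Matrix.toEuclideanLin X w := by
    rw [← Matrix.coe_toEuclideanCLM_eq_toEuclideanLin]; rfl
  rw [h2, hw]

lemma aux_euclidean_op_bound {n : ℕ} (X : Mat n) (w : Euc n) :
    ‖Matrix.toEuclideanLin X w‖ ≤ mnorm X * ‖w‖ := by
  have hcomp : ∀ i, Matrix.toEuclideanLin X w i = ∑ j, X i j * w j := by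
    intro i
    rw [Matrix.toEuclideanLin_apply]
    simp [Matrix.mulVec, dotProduct]
  have hTw : ‖Matrix.toEuclideanLin X w‖^2 = ∑ i, (∑ j, X i j * w j)^2 := by
    rw [EuclideanSpace.norm_eq, Real.sq_sqrt (by positivity)]
    refine Finset.sum_congr rfl fun i _ => ?_
    rw [hcomp, Real.norm_eq_abs, sq_abs]
  have hw2 : ‖w‖^2 = ∑ j, (w j)^2 := by
    rw [EuclideanSpace.norm_eq, Real.sq_sqrt (by positivity)]
    refine Finset.sum_congr rfl fun j _ => ?_
    rw [Real.norm_eq_abs, sq_abs]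
  have hsq : ‖Matrix.toEuclideanLin X w‖^2 ≤ minner X X * ‖w‖^2 := by
    rw [hTw, hw2, aux_minner_self_eq_sum, Finset.sum_mul]
    refine Finset.sum_le_sum fun i _ => ?_
    exact Finset.sum_mul_sq_le_sq_mul_sq Finset.univ (fun j => X i j) w
  have hmn0 : 0 ≤ minner X X := by rw [aux_minner_self_eq_sum]; positivity
  calc ‖Matrix.toEuclideanLin X w‖ = Real.sqrt (‖Matrix.toEuclideanLin X w‖^2) :=
        (Real.sqrt_sq (norm_nonneg _)).symm
    _ ≤ Real.sqrt (minner X X * ‖w‖^2) := Real.sqrt_le_sqrt hsq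
    _ = mnorm X * ‖w‖ := by
        rw [Real.sqrt_mul hmn0, Real.sqrt_sq (norm_nonneg _), mnorm]


/-- Let G be a closed, connected, self-adjoint, noncompact subgroup of GL(n,ℝ)
and v a nonzero minimal vector with G(v) unbounded. Then 0 < λ_X(v) ≤ 1 for every
X ∈ 𝔓̃_v with |X| = 1. -/
theorem stmt11 {n : ℕ} (G : Subgroup (GL (Fin n) ℝ))
    (hclosed : IsClosed (G : Set (GL (Fin n) ℝ)))
    (hconn : IsConnected (G : Set (GL (Fin n) ℝ)))
    (hsa : IsSelfAdjointSubgroup G)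
    (hnc : ¬ IsCompact (G : Set (GL (Fin n) ℝ)))
    (v : Euc n) (hv : v ≠ 0) (hmin : IsMinimalVec G v)
    (hunb : ¬ Bornology.IsBounded (orbitOf G v)) :
    ∀ X ∈ tildeP G v, mnorm X = 1 → 0 < lambdaOf X v ∧ lambdaOf X v ≤ 1 := by
  classical
  intro X hX hmn
  rcases Nat.eq_zero_or_pos n with hn0 | hnpos
  · exfalso
    apply hv
    subst hn0
    ext i
    exact i.elim0
  haveI : Nonempty (Fin n) := ⟨⟨0, hnpos⟩⟩
  have hXalg : X ∈ lieAlgOf G := hX.1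
  -- X is symmetric
  have hsymm : Xᵀ = X := by
    apply aux_symm_of_orth
    refine hX.2 _ (Or.inl ?_)
    refine ⟨aux_lieAlg_add hclosed hXalg (aux_lieAlg_neg (aux_lieAlg_transpose hsa hXalg)), ?_⟩
    rw [Matrix.transpose_add, Matrix.transpose_neg, Matrix.transpose_transpose]
    abel
  have hXX1 : minner X X = 1 := by
    have h := hmn
    rw [mnorm] at h
    exact Real.sqrt_eq_one.mp h
  have hherm : X.IsHermitian := by
    rw [Matrix.IsHermitian, Matrix.conjTranspose_eq_transpose_of_trivial]
    exact hsymm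
  have hT : (Matrix.toEuclideanLin X).IsSymmetric := Matrix.isHermitian_iff_isSymmetric.mp hherm
  have hdim : Module.finrank ℝ (Euc n) = n := finrank_euclideanSpace_fin
  set B := hT.eigenvectorBasis hdim with hB
  set lam := hT.eigenvalues hdim with hlamdef
  set c : Fin n → ℝ := fun i => (inner ℝ (B i) v : ℝ) with hc
  have heig : ∀ i, Matrix.toEuclideanLin X (B i) = lam i • B i := by
    intro i
    have h := hT.apply_eigenvectorBasis hdim i
    exact_mod_cast h
  have hval : v = ∑ i, c i • B i := (B.sum_repr' v).symm
  have hnormsum : ∀ d : Fin n → ℝ, ‖∑ i, d i • B i‖^2 = ∑ i, (d i)^2 := by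
    intro d
    rw [← real_inner_self_eq_norm_sq, B.orthonormal.inner_sum d d]
    simp [sq]
  have hBnorm : ∀ i, ‖B i‖ = 1 := fun i => B.orthonormal.1 i
  have hlam_le : ∀ i, |lam i| ≤ 1 := by
    intro i
    have h1 : ‖Matrix.toEuclideanLin X (B i)‖ = |lam i| := by
      rw [heig, norm_smul, Real.norm_eq_abs, hBnorm, mul_one]
    have h2 := aux_euclidean_op_bound X (B i)
    rw [h1, hBnorm, mul_one, hmn] at h2
    exact h2
  -- minimality at t = 1
  obtain ⟨g1, hg1, hg1val⟩ := hXalg 1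
  have hming : ‖v‖ ≤ ‖act (mexp X) v‖ := by
    have h := hmin g1 hg1
    rwa [hg1val, one_smul] at h
  have hactexp : act (mexp X) v = ∑ i, (Real.exp (lam i) * c i) • B i := by
    show Matrix.toEuclideanLin (mexp X) v = _
    conv_lhs => rw [hval]
    rw [map_sum]
    refine Finset.sum_congr rfl fun i _ => ?_
    rw [_root_.map_smul]
    have h3 : Matrix.toEuclideanLin (mexp X) (B i) = Real.exp (lam i) • B i := by
      have h4 := aux_act_mexp_eigen X (B i) (lam i) (heig i)
      rwa [act] at h4
    rw [h3, smul_smul, mul_comm]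
  have hv2 : ‖v‖^2 = ∑ i, (c i)^2 := by
    conv_lhs => rw [hval]
    exact hnormsum c
  have hnact : ‖act (mexp X) v‖^2 = ∑ i, (Real.exp (lam i) * c i)^2 := by
    rw [hactexp]
    exact hnormsum _
  have hkey : ∑ i, (c i)^2 ≤ ∑ i, (Real.exp (lam i) * c i)^2 := by
    have h2 : ‖v‖^2 ≤ ‖act (mexp X) v‖^2 := by
      nlinarith [norm_nonneg v, norm_nonneg (act (mexp X) v)]
    rwa [hv2, hnact] at h2
  -- the eigenvalue set
  have hcomp : ∀ μ : ℝ, hasComp X v μ ↔ ∃ i, c i ≠ 0 ∧ lam i = μ := by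
    intro μ
    unfold hasComp
    constructor
    · intro hμ
      by_contra hcon
      push_neg at hcon
      apply hμ
      apply Submodule.orthogonalProjectionOnto_apply_of_mem_orthogonal
      rw [Submodule.mem_orthogonal]
      intro u hu
      have hTu : Matrix.toEuclideanLin X u = μ • u := Module.End.mem_eigenspace_iff.mp hu
      have horth : ∀ i, c i ≠ 0 → (inner ℝ u (B i) : ℝ) = 0 := by
        intro i hci
        have hne : lam i ≠ μ := hcon i hci
        have h1 : μ * (inner ℝ u (B i) : ℝ) = lam i * (inner ℝ u (B i) : ℝ) := by
          calc μ * (inner ℝ u (B i) : ℝ) = (inner ℝ ((μ : ℝ) • u) (B i) : ℝ) :=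
                (real_inner_smul_left _ _ _).symm
            _ = (inner ℝ (Matrix.toEuclideanLin X u) (B i) : ℝ) := by rw [hTu]
            _ = (inner ℝ u (Matrix.toEuclideanLin X (B i)) : ℝ) := hT u (B i)
            _ = (inner ℝ u (lam i • B i) : ℝ) := by rw [heig]
            _ = lam i * (inner ℝ u (B i) : ℝ) := real_inner_smul_right _ _ _
        have h2 : (μ - lam i) * (inner ℝ u (B i) : ℝ) = 0 := by linarith
        rcases mul_eq_zero.mp h2 with h3 | h3
        · exact absurd (by linarith : lam i = μ) hne
        · exact h3
      conv_lhs => rw [hval]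
      rw [inner_sum]
      refine Finset.sum_eq_zero fun i _ => ?_
      by_cases hci : c i = 0
      · rw [real_inner_smul_right, hci, zero_mul]
      · rw [real_inner_smul_right, horth i hci, mul_zero]
    · rintro ⟨i, hci, hlami⟩
      intro h0
      have hmem : B i ∈ Module.End.eigenspace (Matrix.toEuclideanLin X) μ :=
        Module.End.mem_eigenspace_iff.mpr (by rw [heig, hlami])
      have h2 := Submodule.inner_starProjection_left_eq_right
        (Module.End.eigenspace (Matrix.toEuclideanLin X) μ) v (B i)
      simp only [Submodule.starProjection_apply] at h2
      have h3 : Submodule.orthogonalProjectionOnto (Module.End.eigenspace (Matrix.toEuclideanLin X) μ) (B i)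
          = ⟨B i, hmem⟩ :=
        Submodule.orthogonalProjectionOnto_mem_subspace_eq_self (⟨B i, hmem⟩ : _)
      rw [h0, h3] at h2
      simp only [ZeroMemClass.coe_zero, inner_zero_left] at h2
      apply hci
      show (inner ℝ (B i) v : ℝ) = 0
      rw [real_inner_comm]
      exact h2.symm
  set Sfin : Finset (Fin n) := Finset.univ.filter (fun i => c i ≠ 0) with hSfin
  have hSne : Sfin.Nonempty := by
    rw [Finset.filter_nonempty_iff]
    by_contra hcon
    push_neg at hcon
    apply hv
    rw [hval]
    refine Finset.sum_eq_zero fun i _ => ?_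
    rw [hcon i (Finset.mem_univ i), zero_smul]
  set SL : Finset ℝ := Sfin.image lam with hSL
  have hSLne : SL.Nonempty := hSne.image lam
  have hseteq : {μ : ℝ | hasComp X v μ} = ↑SL := by
    ext μ
    rw [Set.mem_setOf_eq, hcomp μ]
    constructor
    · rintro ⟨i, hci, hl⟩
      exact Finset.mem_coe.mpr (Finset.mem_image.mpr
        ⟨i, Finset.mem_filter.mpr ⟨Finset.mem_univ i, hci⟩, hl⟩)
    · intro hμ
      obtain ⟨i, hi, hl⟩ := Finset.mem_image.mp (Finset.mem_coe.mp hμ)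
      exact ⟨i, (Finset.mem_filter.mp hi).2, hl⟩
  have hLmax : lambdaOf X v = SL.max' hSLne := by
    rw [lambdaOf, hseteq]
    exact hSLne.csSup_eq_max'
  have hLmem : lambdaOf X v ∈ SL := by
    rw [hLmax]; exact SL.max'_mem hSLne
  have hLub : ∀ μ ∈ SL, μ ≤ lambdaOf X v := by
    intro μ hμ; rw [hLmax]; exact SL.le_max' μ hμ
  constructor
  · -- positivity
    by_contra hpos
    push_neg at hpos
    by_cases hall : ∀ i, c i ≠ 0 → lam i = 0
    · have hXv : act X v = 0 := by
        show Matrix.toEuclideanLin X v = 0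
        conv_lhs => rw [hval]
        rw [map_sum]
        refine Finset.sum_eq_zero fun i _ => ?_
        rw [_root_.map_smul, heig]
        by_cases hci : c i = 0
        · rw [hci]; simp
        · rw [hall i hci]; simp
      have h0 : minner X X = 0 := hX.2 X (Or.inr ⟨hXalg, hXv⟩)
      rw [hXX1] at h0
      norm_num at h0
    · push_neg at hall
      obtain ⟨j, hcj, hlj⟩ := hall
      have hjmem : lam j ∈ SL :=
        Finset.mem_image.mpr ⟨j, Finset.mem_filter.mpr ⟨Finset.mem_univ j, hcj⟩, rfl⟩
      have hlamj : lam j < 0 := lt_of_le_of_ne (le_trans (hLub _ hjmem) hpos) hlj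
      have hstrict : ∑ i, (Real.exp (lam i) * c i)^2 < ∑ i, (c i)^2 := by
        refine Finset.sum_lt_sum (fun i _ => ?_) ⟨j, Finset.mem_univ j, ?_⟩
        · by_cases hci : c i = 0
          · rw [hci]; simp
          · have hmemi : lam i ∈ SL :=
              Finset.mem_image.mpr ⟨i, Finset.mem_filter.mpr ⟨Finset.mem_univ i, hci⟩, rfl⟩
            have hli : lam i ≤ 0 := le_trans (hLub _ hmemi) hpos
            have he1 : Real.exp (lam i) ≤ 1 := by
              rw [← Real.exp_zero]; exact Real.exp_le_exp.mpr hli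
            have h6 : Real.exp (lam i)^2 ≤ 1 := by nlinarith [Real.exp_pos (lam i)]
            calc (Real.exp (lam i) * c i)^2 = Real.exp (lam i)^2 * (c i)^2 := by ring
              _ ≤ 1 * (c i)^2 := mul_le_mul_of_nonneg_right h6 (sq_nonneg _)
              _ = (c i)^2 := one_mul _
        · have he1 : Real.exp (lam j) < 1 := by
            rw [← Real.exp_zero]; exact Real.exp_lt_exp.mpr hlamj
          have hc2 : 0 < (c j)^2 := by positivity
          have h6 : Real.exp (lam j)^2 < 1 := by nlinarith [Real.exp_pos (lam j)]
          calc (Real.exp (lam j) * c j)^2 = Real.exp (lam j)^2 * (c j)^2 := by ring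
            _ < 1 * (c j)^2 := mul_lt_mul_of_pos_right h6 hc2
            _ = (c j)^2 := one_mul _
      linarith
  · -- upper bound
    obtain ⟨i, _, hl⟩ := Finset.mem_image.mp hLmem
    rw [← hl]
    exact le_trans (le_abs_self _) (hlam_le i)

end
end

section
/- Let G be a closed, connected, self-adjoint, noncompact subgroup of GL(n,ℝ). Let v ∈ ℝⁿ be a minimal vector for G with |v| = 1, and let X be a symmetric matrix in the Lie algebra 𝔊 of G with X(v) ≠ 0. Then the function φ(s) = (log |exp(sX)(v)|)/s is monotone nondecreasing on (0,∞); equivalently its derivative satisfies φ'(s) ≥ 0 for all s > 0. -/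
open Matrix Filter Topology

noncomputable section

open RealInnerProductSpace

lemma act_mul {n : ℕ} (A B : Mat n) (w : Euc n) : act (A * B) w = act A (act B w) := by
  simp only [act, ← Matrix.coe_toEuclideanCLM_eq_toEuclideanLin, _root_.map_mul]
  rfl

lemma act_one {n : ℕ} (w : Euc n) : act (1 : Mat n) w = w := by
  simp only [act, ← Matrix.coe_toEuclideanCLM_eq_toEuclideanLin, _root_.map_one]
  rfl

lemma act_clm {n : ℕ} (X : Mat n) (w : Euc n) :
    act X w = Matrix.toEuclideanCLM (𝕜 := ℝ) X w := rfl

lemma hasDerivAt_act_mexp {n : ℕ} (X : Mat n) (v : Euc n) (s : ℝ) :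
    HasDerivAt (fun t : ℝ => act (mexp (t • X)) v) (act X (act (mexp (s • X)) v)) s := by
  letI : SeminormedRing (Mat n) := Matrix.linftyOpSemiNormedRing
  letI : NormedRing (Mat n) := Matrix.linftyOpNormedRing
  letI : NormedAlgebra ℝ (Mat n) := Matrix.linftyOpNormedAlgebra
  letI : CompleteSpace (Mat n) := FiniteDimensional.complete ℝ _
  let L : Mat n →ₗ[ℝ] Euc n :=
    { toFun := fun M => act M v
      map_add' := fun A B => by simp [act, _root_.map_add]
      map_smul' := fun c A => by simp [act, _root_.map_smul] }
  have h := (LinearMap.toContinuousLinearMap L).hasFDerivAt.comp_hasDerivAt s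
    (hasDerivAt_exp_smul_const' (𝕂 := ℝ) X s)
  have he : ∀ M : Mat n, (LinearMap.toContinuousLinearMap L) M = act M v := fun M => rfl
  simp only [Function.comp_def, he] at h
  rw [← act_mul]
  exact h

open RealInnerProductSpace in
lemma inner_act_symm {n : ℕ} {X : Mat n} (hXsym : Xᵀ = X) (a b : Euc n) :
    ⟪act X a, b⟫ = ⟪a, act X b⟫ := by
  have hH : Xᴴ = X := by
    ext i j
    simp only [Matrix.conjTranspose_apply, star_trivial]
    conv_rhs => rw [← hXsym]
    rfl
  have hadj := Matrix.toEuclideanLin_conjTranspose_eq_adjoint (𝕜 := ℝ) X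
  rw [hH] at hadj
  rw [act, act]
  conv_lhs => rw [hadj]
  exact LinearMap.adjoint_inner_left _ _ _

lemma act_mexp_ne {n : ℕ} (X : Mat n) {v : Euc n} (hv : v ≠ 0) (s : ℝ) :
    act (mexp (s • X)) v ≠ 0 := by
  have h1 : mexp (-(s • X)) * mexp (s • X) = 1 := by
    rw [mexp, mexp, ← Matrix.exp_add_of_commute _ _ ((Commute.refl (s • X)).neg_left),
      neg_add_cancel, NormedSpace.exp_zero]
  intro h0
  apply hv
  have := congrArg (fun M => act M v) h1
  simp only [act_mul, act_one] at this
  rw [h0] at this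
  rw [← this, act, _root_.map_zero]


/-- Let G be a closed, connected, self-adjoint, noncompact subgroup of GL(n,ℝ),
v a minimal vector with |v| = 1, and X a symmetric element of the Lie algebra 𝔊 of G with
X(v) ≠ 0. Then φ(s) = (log |exp(sX)(v)|)/s is monotone nondecreasing on (0,∞). -/
theorem stmt16 {n : ℕ} (G : Subgroup (GL (Fin n) ℝ))
    (hclosed : IsClosed (G : Set (GL (Fin n) ℝ)))
    (hconn : IsConnected (G : Set (GL (Fin n) ℝ)))
    (hsa : IsSelfAdjointSubgroup G)
    (hnc : ¬ IsCompact (G : Set (GL (Fin n) ℝ)))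
    (v : Euc n) (hv : ‖v‖ = 1) (hmin : IsMinimalVec G v)
    (X : Mat n) (hXG : X ∈ lieAlgOf G) (hXsym : Xᵀ = X) (hXv : act X v ≠ 0) :
    MonotoneOn (fun s : ℝ => Real.log ‖act (mexp (s • X)) v‖ / s) (Set.Ioi (0 : ℝ)) := by
  have hv0 : v ≠ 0 := by intro h; rw [h, norm_zero] at hv; exact one_ne_zero hv.symm
  set u : ℝ → Euc n := fun s => act (mexp (s • X)) v with hu_def
  have hune : ∀ s, u s ≠ 0 := fun s => act_mexp_ne X hv0 s
  have hu : ∀ s, HasDerivAt u (act X (u s)) s := fun s => hasDerivAt_act_mexp X v s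
  have hXu : ∀ s : ℝ, HasDerivAt (fun t => act X (u t)) (act X (act X (u s))) s := by
    intro s
    have h := (Matrix.toEuclideanCLM (𝕜 := ℝ) X).hasFDerivAt.comp_hasDerivAt s (hu s)
    simpa only [Function.comp_def, ← act_clm] using h
  set g : ℝ → ℝ := fun s => ⟪u s, u s⟫ with hg_def
  have hgpos : ∀ s, 0 < g s := by
    intro s
    have : g s = ‖u s‖ ^ 2 := real_inner_self_eq_norm_sq (u s)
    rw [this]
    exact pow_pos (norm_pos_iff.mpr (hune s)) 2
  set N : ℝ → ℝ := fun s => ⟪u s, act X (u s)⟫ + ⟪act X (u s), u s⟫ with hN_def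
  have hg : ∀ s, HasDerivAt g (N s) s := fun s => HasDerivAt.inner ℝ (hu s) (hu s)
  set N' : ℝ → ℝ := fun s =>
    (⟪u s, act X (act X (u s))⟫ + ⟪act X (u s), act X (u s)⟫) +
    (⟪act X (u s), act X (u s)⟫ + ⟪act X (act X (u s)), u s⟫) with hN'_def
  have hN : ∀ s, HasDerivAt N (N' s) s :=
    fun s => (HasDerivAt.inner ℝ (hu s) (hXu s)).add (HasDerivAt.inner ℝ (hXu s) (hu s))
  set F : ℝ → ℝ := fun s => Real.log (g s) with hF_def
  have hF : ∀ s, HasDerivAt F (N s / g s) s := fun s => (hg s).log (hgpos s).ne'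
  set F'' : ℝ → ℝ := fun s => (N' s * g s - N s * N s) / g s ^ 2 with hF''_def
  have hF2 : ∀ s, HasDerivAt (fun t => N t / g t) (F'' s) s :=
    fun s => (hN s).div (hg s) (hgpos s).ne'
  have hF2nn : ∀ s, 0 ≤ F'' s := by
    intro s
    apply div_nonneg _ (sq_nonneg _)
    have hsym : ⟪u s, act X (act X (u s))⟫ = ⟪act X (u s), act X (u s)⟫ :=
      (inner_act_symm hXsym (u s) (act X (u s))).symm
    have hsym2 : ⟪act X (act X (u s)), u s⟫ = ⟪act X (u s), act X (u s)⟫ :=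
      inner_act_symm hXsym (act X (u s)) (u s)
    have hsym3 : ⟪act X (u s), u s⟫ = ⟪u s, act X (u s)⟫ := real_inner_comm _ _
    have hcs := real_inner_mul_inner_self_le (u s) (act X (u s))
    simp only [hN'_def, hN_def, hg_def, hsym, hsym2, hsym3]
    nlinarith [hcs]
  have hconv : ConvexOn ℝ Set.univ F := by
    refine convexOn_of_hasDerivWithinAt2_nonneg convex_univ
      (f' := fun s => N s / g s) (f'' := F'')
      (fun s _ => (hF s).continuousAt.continuousWithinAt)
      (fun s _ => (hF s).hasDerivWithinAt)
      (fun s _ => (hF2 s).hasDerivWithinAt)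
      (fun s _ => hF2nn s)
  have hu0 : u 0 = v := by
    rw [hu_def]
    simp only [zero_smul, mexp, NormedSpace.exp_zero]
    exact act_one v
  have hF0 : F 0 = 0 := by
    simp only [hF_def, hg_def, hu0, real_inner_self_eq_norm_sq, hv, one_pow, Real.log_one]
  have key : ∀ s, Real.log ‖u s‖ = F s / 2 := by
    intro s
    simp only [hF_def, hg_def, real_inner_self_eq_norm_sq]
    rw [← Real.rpow_natCast, Real.log_rpow (norm_pos_iff.2 (hune s))]
    push_cast; ring
  intro a ha b hb hab
  have ha' : (0:ℝ) < a := ha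
  have hb' : (0:ℝ) < b := hb
  have hconv' : F ((a / b) • b + (1 - a / b) • (0:ℝ)) ≤ (a / b) • F b + (1 - a / b) • F 0 :=
    hconv.2 (Set.mem_univ b) (Set.mem_univ (0:ℝ))
      (div_nonneg ha'.le hb'.le) (by rw [sub_nonneg]; exact div_le_one_of_le₀ hab hb'.le)
      (by ring)
  rw [smul_eq_mul, smul_eq_mul, smul_eq_mul, smul_eq_mul, mul_zero, add_zero,
    div_mul_cancel₀ a hb'.ne', hF0, mul_zero, add_zero] at hconv'
  show Real.log ‖u a‖ / a ≤ Real.log ‖u b‖ / b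
  rw [key a, key b, div_le_div_iff₀ ha' hb']
  have hab2 : a / b * F b * b = a * F b := by field_simp
  nlinarith [hconv']


end
end
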